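/- arXiv:math-ph/0310033 — 3 statements merged into one kernel-verified Lean document; each statement's English description precedes it below -/
import Mathlib

section
/- There exist constants f₁, f₂ ∈ (0,∞) and r₁ > 0 such that for every x₂ ∈ ℝ^{d₂} with |x₂| ≥ r₁ one has f₁ · |x₂|^{−α₂(1−γ₁)} ≤ ∫_{{y₂ : |y₂| < 1/2}} f^{(2)}(y₂ − x₂) dy₂ and f^{(2)}(x₂) ≤ f₂ · |x₂|^{−α₂(1−γ₁)}. -/
open MeasureTheory ENNReal

noncomputable section

/-- The half-open unit cube `Λ_j = j + [-1/2, 1/2)^d` centred at the lattice point `j`. -/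
def cube (d : ℕ) (j : Fin d → ℤ) : Set (Fin d → ℝ) :=
  {x | ∀ i, (j i : ℝ) - 1/2 ≤ x i ∧ x i < (j i : ℝ) + 1/2}

/-- The unit cube in the product space `ℝ^{d₁} × ℝ^{d₂}` centred at the lattice point `j`. -/
def cubeP (d₁ d₂ : ℕ) (j : (Fin d₁ → ℤ) × (Fin d₂ → ℤ)) :
    Set ((Fin d₁ → ℝ) × (Fin d₂ → ℝ)) :=
  (cube d₁ j.1) ×ˢ (cube d₂ j.2)

lemma cube_eq (d : ℕ) (j : Fin d → ℤ) :
    cube d j = Set.pi Set.univ (fun i => Set.Ico ((j i : ℝ) - 1/2) ((j i : ℝ) + 1/2)) := by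
  ext x; simp [cube, Set.mem_pi]

lemma measurableSet_cube (d : ℕ) (j : Fin d → ℤ) : MeasurableSet (cube d j) := by
  rw [cube_eq]; exact MeasurableSet.univ_pi fun i => measurableSet_Ico

lemma add_mem_cube_iff (d : ℕ) (j : Fin d → ℤ) (x : Fin d → ℝ) :
    (x + fun i => (j i : ℝ)) ∈ cube d j ↔ x ∈ cube d 0 := by
  simp only [cube, Set.mem_setOf_eq, Pi.add_apply, Pi.zero_apply, Int.cast_zero]
  constructor <;> intro h i <;> have := h i <;> constructor <;> [skip; skip; skip; skip] <;> linarith [this.1, this.2]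

lemma cube_disjoint (d : ℕ) {j j' : Fin d → ℤ} (h : j ≠ j') :
    Disjoint (cube d j) (cube d j') := by
  rw [Set.disjoint_left]
  intro x hx hx'
  apply h
  funext i
  have h1 := hx i; have h2 := hx' i
  have : (j i : ℝ) < (j' i : ℝ) + 1 := by linarith [h1.1, h2.2]
  have : (j' i : ℝ) < (j i : ℝ) + 1 := by linarith [h1.2, h2.1]
  have a : (j i : ℝ) < (j' i : ℝ) + 1 := by linarith [h1.1, h2.2]
  have b : ((j i : ℝ)) < (j' i) + 1 := a
  exact_mod_cast le_antisymm (by exact_mod_cast Int.lt_add_one_iff.mp (by exact_mod_cast a))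
    (by exact_mod_cast Int.lt_add_one_iff.mp (by exact_mod_cast this))

lemma ball_ae_cube (d : ℕ) :
    ({y : Fin d → ℝ | ‖y‖ < 1/2} : Set (Fin d → ℝ)) =ᵐ[volume] cube d 0 := by
  rw [MeasureTheory.ae_eq_set]
  constructor
  · have : {y : Fin d → ℝ | ‖y‖ < 1/2} \ cube d 0 = ∅ := by
      rw [Set.diff_eq_empty]
      intro y hy
      intro i
      have h := norm_le_pi_norm y i
      have h2 : |y i| < 1/2 := lt_of_le_of_lt (by simpa using h) hy
      have := abs_lt.mp h2
      simp only [Pi.zero_apply, Int.cast_zero]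
      constructor <;> linarith [this.1, this.2]
    rw [this]; simp
  · have hplane : ∀ i : Fin d, volume {y : Fin d → ℝ | y i = -(1/2)} = 0 := by
      intro i
      rw [MeasureTheory.volume_pi]
      exact Measure.pi_hyperplane (fun _ : Fin d => (volume : Measure ℝ)) i (-(1/2) : ℝ)
    refine measure_mono_null ?_ (measure_iUnion_null hplane)
    intro y hy
    obtain ⟨hc, hb⟩ := hy
    rw [Set.mem_setOf_eq, not_lt] at hb
    have : ¬ ∀ i, ‖y i‖ < 1/2 := by
      intro hall
      exact absurd ((pi_norm_lt_iff (by norm_num)).mpr hall) (not_lt.mpr hb)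
    push_neg at this
    obtain ⟨i, hi⟩ := this
    refine Set.mem_iUnion.mpr ⟨i, ?_⟩
    have h := hc i
    simp only [Pi.zero_apply, Int.cast_zero] at h
    have h1 : -(1/2 : ℝ) ≤ y i := by linarith [h.1]
    have h2 : y i < 1/2 := by linarith [h.2]
    rw [Real.norm_eq_abs] at hi
    show y i = -(1/2)
    rcases le_or_gt 0 (y i) with hpos | hneg
    · rw [abs_of_nonneg hpos] at hi; linarith
    · rw [abs_of_neg hneg] at hi; linarith

lemma setLIntegral_translate {G : Type*} [MeasurableSpace G] [AddCommGroup G] [MeasurableAdd G]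
    (μ : Measure G) [μ.IsAddRightInvariant] {s : Set G} (hs : MeasurableSet s)
    (g : G → ℝ≥0∞) (c : G) :
    ∫⁻ y in (fun z => z + c) ⁻¹' s, g (y + c) ∂μ = ∫⁻ y in s, g y ∂μ := by
  rw [← lintegral_indicator hs, ← lintegral_indicator (hs.preimage (measurable_add_const c))]
  have : ∀ y, ((fun z => z + c) ⁻¹' s).indicator (fun y => g (y + c)) y
      = s.indicator g (y + c) := by
    intro y
    by_cases h : y + c ∈ s <;> simp [Set.indicator, h]
  simp_rw [this]
  exact lintegral_add_right_eq_self (s.indicator g) c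

lemma lintegral_scale (d : ℕ) (g : (Fin d → ℝ) → ℝ≥0∞) (hg : Measurable g) {c : ℝ} (hc : 0 < c) :
    ∫⁻ x, g x = ENNReal.ofReal (c ^ d) * ∫⁻ u, g (c • u) := by
  have h1 : ∫⁻ u, g (c • u) = ENNReal.ofReal (abs (c ^ d)⁻¹) * ∫⁻ x, g x := by
    rw [← lintegral_map hg (measurable_const_smul c), Measure.map_addHaar_smul volume hc.ne',
      lintegral_smul_measure, Module.finrank_fin_fun, smul_eq_mul]
  rw [h1, ← mul_assoc, ← ENNReal.ofReal_mul (by positivity), abs_of_nonneg (by positivity),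
    mul_inv_cancel₀ (by positivity), ENNReal.ofReal_one, one_mul]

lemma one_div_rpow_le (α : ℝ) (hα : 0 < α) (a : ℝ) (ha : 0 ≤ a) :
    1 / (a ^ α + 1) ≤ 2 ^ α * (1 + a) ^ (-α) := by
  have hmax : (0:ℝ) < max 1 a := lt_of_lt_of_le one_pos (le_max_left _ _)
  have h1 : (1 + a) ^ α ≤ 2 ^ α * (a ^ α + 1) := by
    calc (1 + a) ^ α ≤ (2 * max 1 a) ^ α := by
          apply Real.rpow_le_rpow (by linarith) ?_ hα.le
          rcases le_total a 1 with h | h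
          · rw [max_eq_left h]; linarith
          · rw [max_eq_right h]; linarith
      _ = 2 ^ α * (max 1 a) ^ α := Real.mul_rpow (by norm_num) hmax.le
      _ ≤ 2 ^ α * (a ^ α + 1) := by
          apply mul_le_mul_of_nonneg_left ?_ (Real.rpow_nonneg (by norm_num) α)
          rcases le_total a 1 with h | h
          · rw [max_eq_left h, Real.one_rpow]
            have := Real.rpow_nonneg ha α; linarith
          · rw [max_eq_right h]
            linarith
  have hb : (0:ℝ) < a ^ α + 1 := by positivity
  have hc' : (0:ℝ) < (1 + a) ^ α := Real.rpow_pos_of_pos (by linarith) α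
  rw [Real.rpow_neg (by linarith : (0:ℝ) ≤ 1 + a)]
  rw [← div_eq_mul_inv, div_le_div_iff₀ hb hc']
  nlinarith [h1]

lemma J_lt_top (d : ℕ) (α : ℝ) (hd : (d:ℝ) < α) (h0 : 0 < α) :
    (∫⁻ u : Fin d → ℝ, ENNReal.ofReal (1 / (‖u‖ ^ α + 1))) < ∞ := by
  have hb : ∀ u : Fin d → ℝ, ENNReal.ofReal (1 / (‖u‖ ^ α + 1))
      ≤ ENNReal.ofReal (2 ^ α) * ENNReal.ofReal ((1 + ‖u‖) ^ (-α)) := by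
    intro u
    rw [← ENNReal.ofReal_mul (by positivity)]
    exact ENNReal.ofReal_le_ofReal (one_div_rpow_le α h0 ‖u‖ (norm_nonneg u))
  calc (∫⁻ u : Fin d → ℝ, ENNReal.ofReal (1 / (‖u‖ ^ α + 1)))
      ≤ ∫⁻ u : Fin d → ℝ, ENNReal.ofReal (2 ^ α) * ENNReal.ofReal ((1 + ‖u‖) ^ (-α)) :=
        lintegral_mono hb
    _ = ENNReal.ofReal (2 ^ α) * ∫⁻ u : Fin d → ℝ, ENNReal.ofReal ((1 + ‖u‖) ^ (-α)) := by
        rw [lintegral_const_mul]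
        fun_prop
    _ < ∞ := by
        apply ENNReal.mul_lt_top ENNReal.ofReal_lt_top
        apply finite_integral_one_add_norm
        rwa [Module.finrank_fin_fun]

set_option maxHeartbeats 1000000

/-- Lemma on the marginal impurity potential `f⁽²⁾`:
there are `f₁, f₂ ∈ (0,∞)` and `r₁ > 0` such that for `|x₂| ≥ r₁`
`f₁ |x₂|^{-α₂(1-γ₁)} ≤ ∫_{|y₂|<1/2} f⁽²⁾(y₂ - x₂) dy₂` and
`f⁽²⁾(x₂) ≤ f₂ |x₂|^{-α₂(1-γ₁)}`. -/
theorem statement1 (d₁ d₂ : ℕ) (hd₁ : 0 < d₁) (hd₂ : 0 < d₂)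
    (f : (Fin d₁ → ℝ) × (Fin d₂ → ℝ) → ℝ)
    (hf_meas : Measurable f) (hf_nonneg : ∀ x, 0 ≤ f x)
    (α₁ α₂ : ℝ) (hα₁ : 0 < α₁) (hα₂ : 0 < α₂)
    (hγ : (d₁ : ℝ) / α₁ + (d₂ : ℝ) / α₂ < 1)
    (f_u f₀ r₀ : ℝ) (hfu : 0 < f_u) (hf₀ : 0 < f₀) (hr₀ : 0 < r₀)
    (h_low : ∀ x : (Fin d₁ → ℝ) × (Fin d₂ → ℝ), r₀ ≤ max ‖x.1‖ ‖x.2‖ →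
      ENNReal.ofReal (f_u / (‖x.1‖ ^ α₁ + ‖x.2‖ ^ α₂)) ≤
        ∫⁻ y in cubeP d₁ d₂ 0, ENNReal.ofReal (f (y - x)))
    (h_upp : ∀ x : (Fin d₁ → ℝ) × (Fin d₂ → ℝ), r₀ ≤ max ‖x.1‖ ‖x.2‖ →
      f x ≤ f₀ / (‖x.1‖ ^ α₁ + ‖x.2‖ ^ α₂)) :
    ∃ f₁ f₂ r₁ : ℝ, 0 < f₁ ∧ 0 < f₂ ∧ 0 < r₁ ∧
      ∀ x₂ : Fin d₂ → ℝ, r₁ ≤ ‖x₂‖ →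
        (ENNReal.ofReal (f₁ * ‖x₂‖ ^ (-(α₂ * (1 - (d₁ : ℝ) / α₁)))) ≤
          ∫⁻ y₂ in {y₂ : Fin d₂ → ℝ | ‖y₂‖ < 1/2},
            ∫⁻ x₁ : Fin d₁ → ℝ, ENNReal.ofReal (f (x₁, y₂ - x₂))) ∧
        (∫⁻ x₁ : Fin d₁ → ℝ, ENNReal.ofReal (f (x₁, x₂))) ≤
          ENNReal.ofReal (f₂ * ‖x₂‖ ^ (-(α₂ * (1 - (d₁ : ℝ) / α₁)))) := by
  classical
  have hγ₁pos : 0 < (d₁ : ℝ) / α₁ := div_pos (by exact_mod_cast hd₁) hα₁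
  have hγ₂pos : 0 < (d₂ : ℝ) / α₂ := div_pos (by exact_mod_cast hd₂) hα₂
  have hγ₁lt : (d₁ : ℝ) / α₁ < 1 := by linarith
  have hd₁α : (d₁ : ℝ) < α₁ := (div_lt_one hα₁).mp hγ₁lt
  set J := ∫⁻ u : Fin d₁ → ℝ, ENNReal.ofReal (1 / (‖u‖ ^ α₁ + 1)) with hJdef
  have hJfin : J < ⊤ := J_lt_top d₁ α₁ hd₁α hα₁
  set M := max 1 J.toReal with hMdef
  have hM1 : (1 : ℝ) ≤ M := le_max_left _ _
  have hM0 : (0 : ℝ) < M := by linarith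
  have hJM : J ≤ ENNReal.ofReal M := by
    rw [← ENNReal.ofReal_toReal hJfin.ne]
    exact ENNReal.ofReal_le_ofReal (le_max_right _ _)
  refine ⟨f_u / 2 ^ (d₁ + 1), f₀ * M, max (max r₀ 1) (2 ^ (α₁ / α₂)), by positivity, by positivity,
    lt_of_lt_of_le hr₀ (le_trans (le_max_left _ _) (le_max_left _ _)), ?_⟩
  intro x₂ hx₂
  have htr₀ : r₀ ≤ ‖x₂‖ := le_trans (le_trans (le_max_left _ _) (le_max_left _ _)) hx₂
  have ht1 : (1:ℝ) ≤ ‖x₂‖ := le_trans (le_trans (le_max_right r₀ 1) (le_max_left _ _)) hx₂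
  have htc : (2:ℝ) ^ (α₁ / α₂) ≤ ‖x₂‖ := le_trans (le_max_right _ _) hx₂
  have ht0 : (0:ℝ) < ‖x₂‖ := by linarith
  set t := ‖x₂‖ with htdef
  set c := t ^ (α₂ / α₁) with hcdef
  have hcpos : 0 < c := Real.rpow_pos_of_pos ht0 _
  have hc2 : (2:ℝ) ≤ c := by
    have hmul : (α₁ / α₂) * (α₂ / α₁) = 1 := by field_simp
    calc (2:ℝ) = ((2:ℝ) ^ (α₁ / α₂)) ^ (α₂ / α₁) := by
          rw [← Real.rpow_mul (by norm_num : (0:ℝ) ≤ 2), hmul, Real.rpow_one]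
      _ ≤ t ^ (α₂ / α₁) := Real.rpow_le_rpow (by positivity) htc (by positivity)
  have hcα : c ^ α₁ = t ^ α₂ := by
    rw [hcdef, ← Real.rpow_mul ht0.le, div_mul_cancel₀ _ hα₁.ne']
  have htα₂pos : (0:ℝ) < t ^ α₂ := Real.rpow_pos_of_pos ht0 _
  have hid : t ^ (-(α₂ * (1 - (d₁:ℝ)/α₁))) = c ^ d₁ / t ^ α₂ := by
    have he : -(α₂ * (1 - (d₁:ℝ)/α₁)) = (α₂/α₁) * (d₁:ℝ) + (-α₂) := by field_simp; ring
    rw [he, Real.rpow_add ht0, Real.rpow_neg ht0.le, Real.rpow_mul ht0.le,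
      Real.rpow_natCast, ← hcdef, div_eq_mul_inv]
  set N := ⌊c⌋₊ with hNdef
  have hNc : (N:ℝ) ≤ c := Nat.floor_le hcpos.le
  have hcN : c / 2 ≤ (N:ℝ) := by
    have := Nat.sub_one_lt_floor c
    rw [← hNdef] at this
    linarith
  set S : Finset (Fin d₁ → ℕ) := Fintype.piFinset fun _ => Finset.range N with hSdef
  have hScard : S.card = N ^ d₁ := by
    simp [hSdef, Finset.prod_const]
  constructor
  · -- lower bound
    set g : (Fin d₁ → ℝ) × (Fin d₂ → ℝ) → ℝ≥0∞ :=
      fun z => ENNReal.ofReal (f (z.1, z.2 - x₂)) with hgdef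
    have hg : Measurable g :=
      ENNReal.measurable_ofReal.comp (hf_meas.comp (measurable_fst.prodMk
        (measurable_snd.sub measurable_const)))
    have hj : ∀ j ∈ S, ENNReal.ofReal (f_u / (2 * t ^ α₂)) ≤
        ∫⁻ z in (cube d₁ (fun i => (j i : ℤ))) ×ˢ (cube d₂ 0), g z
          ∂((volume : Measure (Fin d₁ → ℝ)).prod volume) := by
      intro j hjS
      set v : Fin d₁ → ℝ := fun i => ((j i : ℤ) : ℝ) with hvdef
      have hv0 : ∀ i, (0:ℝ) ≤ v i := fun i => by
        simp [hvdef]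
      have hvnorm : ‖v‖ ≤ c := by
        rw [pi_norm_le_iff_of_nonneg hcpos.le]
        intro i
        rw [Real.norm_eq_abs, abs_of_nonneg (hv0 i)]
        have hji : j i < N := by
          have := (Fintype.mem_piFinset.mp hjS) i
          simpa using this
        have h1 : v i < (N:ℝ) := by
          simp only [hvdef]
          exact_mod_cast hji
        linarith
      have hpre : (fun z : (Fin d₁ → ℝ) × (Fin d₂ → ℝ) => z + (v, 0)) ⁻¹'
          ((cube d₁ (fun i => (j i : ℤ))) ×ˢ (cube d₂ 0)) = cubeP d₁ d₂ 0 := by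
        ext z
        simp only [Set.mem_preimage, Set.mem_prod, Prod.fst_add, Prod.snd_add, add_zero,
          cubeP, Prod.fst_zero, Prod.snd_zero]
        exact and_congr_left' (add_mem_cube_iff d₁ _ z.1)
      have htrans : ∫⁻ z in (cube d₁ (fun i => (j i : ℤ))) ×ˢ (cube d₂ 0), g z
            ∂((volume : Measure (Fin d₁ → ℝ)).prod volume)
          = ∫⁻ y in cubeP d₁ d₂ 0, ENNReal.ofReal (f (y - (-v, x₂)))
            ∂((volume : Measure (Fin d₁ → ℝ)).prod volume) := by
        rw [← setLIntegral_translate ((volume : Measure (Fin d₁ → ℝ)).prod volume)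
          ((measurableSet_cube d₁ _).prod (measurableSet_cube d₂ 0)) g ((v, 0)), hpre]
        apply lintegral_congr
        intro y
        have : (y.1 + v, y.2 + 0 - x₂) = y - (-v, x₂) := by
          simp [Prod.ext_iff, sub_eq_add_neg]
        simp only [hgdef, Prod.fst_add, Prod.snd_add]
        rw [this]
      rw [htrans]
      have hmax : r₀ ≤ max ‖(-v : Fin d₁ → ℝ)‖ ‖x₂‖ := le_trans htr₀ (le_max_right _ _)
      have hlow := h_low (-v, x₂) hmax
      rw [Measure.volume_eq_prod] at hlow
      refine le_trans ?_ hlow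
      apply ENNReal.ofReal_le_ofReal
      have hvα : ‖(-v : Fin d₁ → ℝ)‖ ^ α₁ ≤ t ^ α₂ := by
        rw [norm_neg, ← hcα]
        exact Real.rpow_le_rpow (norm_nonneg v) hvnorm hα₁.le
      have hden : (0:ℝ) < ‖(-v : Fin d₁ → ℝ)‖ ^ α₁ + t ^ α₂ := by positivity
      have h2t : ‖(-v : Fin d₁ → ℝ)‖ ^ α₁ + t ^ α₂ ≤ 2 * t ^ α₂ := by linarith
      gcongr
    have hdisj : (S : Set (Fin d₁ → ℕ)).PairwiseDisjoint
        (fun j => (cube d₁ (fun i => (j i : ℤ))) ×ˢ (cube d₂ 0 : Set (Fin d₂ → ℝ))) := by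
      intro a ha b hb hab
      refine Set.Disjoint.set_prod_left (cube_disjoint d₁ ?_) _ _
      intro h
      exact hab (funext fun i => by exact_mod_cast congrFun h i)
    calc ENNReal.ofReal (f_u / 2 ^ (d₁ + 1) * t ^ (-(α₂ * (1 - (d₁:ℝ)/α₁))))
        ≤ ((N : ℝ≥0∞)) ^ d₁ * ENNReal.ofReal (f_u / (2 * t ^ α₂)) := by
          rw [← ENNReal.ofReal_natCast N, ← ENNReal.ofReal_pow (Nat.cast_nonneg N),
            ← ENNReal.ofReal_mul (by positivity)]
          apply ENNReal.ofReal_le_ofReal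
          rw [hid]
          have h1 : (c/2)^d₁ ≤ (N:ℝ)^d₁ := pow_le_pow_left₀ (by positivity) hcN d₁
          have heq : f_u / 2 ^ (d₁+1) * (c ^ d₁ / t ^ α₂) = (c/2)^d₁ * (f_u / (2 * t ^ α₂)) := by
            rw [div_pow]
            field_simp
            ring
          rw [heq]
          exact mul_le_mul_of_nonneg_right h1 (by positivity)
      _ = ∑ j ∈ S, ENNReal.ofReal (f_u / (2 * t ^ α₂)) := by
          rw [Finset.sum_const, hScard, nsmul_eq_mul, Nat.cast_pow]
      _ ≤ ∑ j ∈ S, ∫⁻ z in (cube d₁ (fun i => (j i : ℤ))) ×ˢ (cube d₂ 0), g z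
            ∂((volume : Measure (Fin d₁ → ℝ)).prod volume) := Finset.sum_le_sum hj
      _ = ∫⁻ z in ⋃ j ∈ S, ((cube d₁ (fun i => (j i : ℤ))) ×ˢ (cube d₂ 0 : Set (Fin d₂ → ℝ))), g z
            ∂((volume : Measure (Fin d₁ → ℝ)).prod volume) :=
          (lintegral_biUnion_finset hdisj
            (fun j _ => ((measurableSet_cube d₁ _).prod (measurableSet_cube d₂ 0))) g).symm
      _ = ∫⁻ z in (⋃ j ∈ S, cube d₁ (fun i => (j i : ℤ))) ×ˢ (cube d₂ 0 : Set (Fin d₂ → ℝ)), g z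
            ∂((volume : Measure (Fin d₁ → ℝ)).prod volume) := by
          have hU : (⋃ j ∈ S, ((cube d₁ fun i => (j i : ℤ)) ×ˢ (cube d₂ 0 : Set (Fin d₂ → ℝ))))
              = (⋃ j ∈ S, cube d₁ fun i => (j i : ℤ)) ×ˢ (cube d₂ 0 : Set (Fin d₂ → ℝ)) := by
            ext z
            simp only [Set.mem_iUnion, Set.mem_prod]
            tauto
          rw [hU]
      _ = ∫⁻ y₂ in cube d₂ 0, ∫⁻ x₁ in (⋃ j ∈ S, cube d₁ (fun i => (j i : ℤ))), g (x₁, y₂) := by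
          rw [← Measure.prod_restrict, lintegral_prod_symm' g hg]
      _ ≤ ∫⁻ y₂ in cube d₂ 0, ∫⁻ x₁, g (x₁, y₂) :=
          lintegral_mono fun y₂ => setLIntegral_le_lintegral _ _
      _ = ∫⁻ y₂ in {y₂ : Fin d₂ → ℝ | ‖y₂‖ < 1/2},
            ∫⁻ x₁ : Fin d₁ → ℝ, ENNReal.ofReal (f (x₁, y₂ - x₂)) :=
          (setLIntegral_congr (ball_ae_cube d₂)).symm
  · -- upper bound
    have hcont : Continuous fun x₁ : Fin d₁ → ℝ => ‖x₁‖ ^ α₁ :=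
      continuous_norm.rpow_const fun x => Or.inr hα₁.le
    have hgmeas : Measurable fun x₁ : Fin d₁ → ℝ => ENNReal.ofReal (f₀ / (‖x₁‖ ^ α₁ + t ^ α₂)) :=
      (ENNReal.continuous_ofReal.comp (continuous_const.div (hcont.add continuous_const)
        fun x => ne_of_gt (add_pos_of_nonneg_of_pos (Real.rpow_nonneg (norm_nonneg _) _) htα₂pos))).measurable
    have hmeasJint : Measurable fun u : Fin d₁ → ℝ => ENNReal.ofReal (1 / (‖u‖ ^ α₁ + 1)) :=
      (ENNReal.continuous_ofReal.comp (continuous_const.div (hcont.add continuous_const)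
        fun x => ne_of_gt (add_pos_of_nonneg_of_pos (Real.rpow_nonneg (norm_nonneg _) _) one_pos))).measurable
    calc (∫⁻ x₁, ENNReal.ofReal (f (x₁, x₂)))
        ≤ ∫⁻ x₁, ENNReal.ofReal (f₀ / (‖x₁‖ ^ α₁ + t ^ α₂)) :=
          lintegral_mono fun x₁ => ENNReal.ofReal_le_ofReal
            (h_upp (x₁, x₂) (le_trans htr₀ (le_max_right _ _)))
      _ = ENNReal.ofReal (c ^ d₁) * ∫⁻ u, ENNReal.ofReal (f₀ / (‖c • u‖ ^ α₁ + t ^ α₂)) :=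
          lintegral_scale d₁ _ hgmeas hcpos
      _ = ENNReal.ofReal (c ^ d₁) * (ENNReal.ofReal (f₀ / t ^ α₂) * J) := by
          congr 1
          rw [hJdef, ← lintegral_const_mul _ hmeasJint]
          apply lintegral_congr
          intro u
          rw [← ENNReal.ofReal_mul (by positivity)]
          congr 1
          rw [norm_smul, Real.norm_eq_abs, abs_of_pos hcpos,
            Real.mul_rpow hcpos.le (norm_nonneg u), hcα, div_mul_div_comm, mul_one,
            mul_add, mul_one]
      _ ≤ ENNReal.ofReal (c ^ d₁) * (ENNReal.ofReal (f₀ / t ^ α₂) * ENNReal.ofReal M) := by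
          gcongr
      _ = ENNReal.ofReal ((c ^ d₁) * ((f₀ / t ^ α₂) * M)) := by
          rw [ENNReal.ofReal_mul (by positivity), ENNReal.ofReal_mul (by positivity)]
      _ ≤ ENNReal.ofReal (f₀ * M * t ^ (-(α₂ * (1 - (d₁:ℝ)/α₁)))) := by
          apply le_of_eq
          congr 1
          rw [hid]
          ring
end
end

section
/- For R > 1 define V_R(x) := Σ_{j=(j₁,j₂)∈ℤ^{d₁}×ℤ^{d₂}, |j₂| > R−1} sup_{y∈Λ_j} f(x − y) ∈ [0,∞]. Then: (i) for every Borel measure ν on ℝ^d with ν(Λ_j) ≤ 1 for all j ∈ ℤ^d and every x ∈ ℝ^d, ∫_{{y : |y₂| > R}} f(x − y) ν(dy) ≤ V_R(x); and (ii) there exist c > 0 and R₀ > 1 such that sup_{x∈Λ₀} V_R(x) ≤ c · R^{−α₂(1−γ)} for all R ≥ R₀. -/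
open MeasureTheory ENNReal

noncomputable section

open scoped Classical in
/-- `V_R(x) := Σ_{j = (j₁,j₂), |j₂| > R-1} sup_{y ∈ Λ_j} f(x - y) ∈ [0,∞]`. -/
def VR (d₁ d₂ : ℕ) (f : (Fin d₁ → ℝ) × (Fin d₂ → ℝ) → ℝ) (R : ℝ)
    (x : (Fin d₁ → ℝ) × (Fin d₂ → ℝ)) : ℝ≥0∞ :=
  ∑' j : (Fin d₁ → ℤ) × (Fin d₂ → ℤ),
    if R - 1 < ‖j.2‖ then ⨆ y ∈ cubeP d₁ d₂ j, ENNReal.ofReal (f (x - y)) else 0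

namespace S8

def natNorm {d : ℕ} (j : Fin d → ℤ) : ℕ := Finset.univ.sup fun i => (j i).natAbs

lemma nnnorm_eq_natNorm {d : ℕ} (j : Fin d → ℤ) : ‖j‖₊ = (natNorm j : NNReal) := by
  rw [Pi.nnnorm_def, natNorm]
  rw [Finset.comp_sup_eq_sup_comp (g := ((↑) : ℕ → NNReal))
    (fun x y => by simp [Nat.cast_max]) (by simp)]
  apply Finset.sup_congr rfl
  intro i _
  simp only [Function.comp]
  ext
  simp [Int.norm_eq_abs, Nat.cast_natAbs, abs_of_nonneg]

lemma norm_eq_natNorm {d : ℕ} (j : Fin d → ℤ) : ‖j‖ = (natNorm j : ℝ) := by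
  rw [← coe_nnnorm, nnnorm_eq_natNorm]; simp

def ballF (d m : ℕ) : Finset (Fin d → ℤ) :=
  Fintype.piFinset fun _ => Finset.Icc (-(m : ℤ)) m

lemma mem_ballF {d m : ℕ} (j : Fin d → ℤ) : j ∈ ballF d m ↔ natNorm j ≤ m := by
  rw [ballF, Fintype.mem_piFinset, natNorm, Finset.sup_le_iff]
  constructor
  · intro h i _; have := h i; rw [Finset.mem_Icc] at this; omega
  · intro h i; have := h i (Finset.mem_univ i); rw [Finset.mem_Icc]; omega

lemma card_ballF (d m : ℕ) : (ballF d m).card = (2 * m + 1) ^ d := by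
  rw [ballF, Fintype.card_piFinset]
  simp [Int.card_Icc]
  congr 1
  omega

/-- tsum bounded by card times bound, when support in a finset -/
lemma tsum_le_card_mul {ι : Type*} (s : Finset ι) (F : ι → ℝ≥0∞) (c : ℝ≥0∞)
    (h0 : ∀ j ∉ s, F j = 0) (hb : ∀ j, F j ≤ c) :
    ∑' j, F j ≤ s.card * c := by
  rw [tsum_eq_sum h0]
  calc ∑ j ∈ s, F j ≤ s.card • c := Finset.sum_le_card_nsmul s F c (fun x _ => hb x)
  _ = s.card * c := by simp [nsmul_eq_mul]

lemma tsum_ite_shift (k₀ : ℕ) : ∀ (g : ℕ → ℝ≥0∞),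
    ∑' k, (if k < k₀ then 0 else g k) = ∑' m, g (m + k₀) := by
  induction k₀ with
  | zero => intro g; simp
  | succ n ih =>
    intro g
    rw [tsum_eq_zero_add' ENNReal.summable]
    simp only [Nat.zero_lt_succ, if_true, zero_add, Nat.add_lt_add_iff_right]
    rw [ih (fun k => g (k + 1))]
    apply tsum_congr; intro m; exact congrArg g (by omega)

lemma norm_intCast {d : ℕ} (j : Fin d → ℤ) :
    ‖((fun i => ((j i : ℝ))) : Fin d → ℝ)‖ = ‖j‖ := by
  rw [Pi.norm_def, Pi.norm_def]
  norm_cast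

lemma cube_dist {d : ℕ} {y : Fin d → ℝ} {j : Fin d → ℤ} (h : y ∈ cube d j) :
    ‖y - ((fun i => ((j i : ℝ))) : Fin d → ℝ)‖ ≤ 1/2 := by
  rw [pi_norm_le_iff_of_nonneg (by norm_num)]
  intro i
  have := h i
  rw [Pi.sub_apply, Real.norm_eq_abs, abs_le]
  constructor <;> [linarith [this.1]; linarith [this.2]]

lemma cube_norm_lower {d : ℕ} {y : Fin d → ℝ} {j : Fin d → ℤ} (h : y ∈ cube d j) :
    ‖j‖ - 1/2 ≤ ‖y‖ := by
  have h1 := cube_dist h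
  have h2 := abs_norm_sub_norm_le y ((fun i => ((j i : ℝ))) : Fin d → ℝ)
  rw [norm_intCast] at h2
  rw [abs_le] at h2
  linarith [h2.1]

lemma cube_norm_upper {d : ℕ} {y : Fin d → ℝ} {j : Fin d → ℤ} (h : y ∈ cube d j) :
    ‖y‖ ≤ ‖j‖ + 1/2 := by
  have h1 := cube_dist h
  have h2 := abs_norm_sub_norm_le y ((fun i => ((j i : ℝ))) : Fin d → ℝ)
  rw [norm_intCast] at h2
  rw [abs_le] at h2
  linarith [h2.2]

lemma cube_sub_lower {d : ℕ} {x y : Fin d → ℝ} {j : Fin d → ℤ} (h : y ∈ cube d j)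
    (hx : ‖x‖ ≤ 1/2) : ‖j‖ - 1 ≤ ‖x - y‖ := by
  have h1 := cube_norm_lower h
  have h2 := abs_norm_sub_norm_le x y
  rw [abs_le] at h2
  linarith [h2.1]

lemma cube_measurable (d : ℕ) (j : Fin d → ℤ) : MeasurableSet (cube d j) := by
  have : cube d j = Set.pi Set.univ
      (fun i => Set.Ico ((j i : ℝ) - 1/2) ((j i : ℝ) + 1/2)) := by
    ext y
    simp [cube, Set.mem_pi, Set.mem_Ico]
  rw [this]
  exact MeasurableSet.pi Set.countable_univ (fun i _ => measurableSet_Ico)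

lemma cubeP_measurable (d₁ d₂ : ℕ) (j : (Fin d₁ → ℤ) × (Fin d₂ → ℤ)) :
    MeasurableSet (cubeP d₁ d₂ j) :=
  (cube_measurable d₁ j.1).prod (cube_measurable d₂ j.2)

lemma mem_cube_floor {d : ℕ} (y : Fin d → ℝ) : y ∈ cube d (fun i => ⌊y i + 1/2⌋) := by
  intro i
  constructor
  · have := Int.floor_le (y i + 1/2); linarith
  · have := Int.lt_floor_add_one (y i + 1/2); linarith

lemma norm_zero_lattice {d : ℕ} : ‖(0 : Fin d → ℤ)‖ = 0 := norm_zero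

lemma mem_cube_zero_norm {d : ℕ} {x : Fin d → ℝ} (h : x ∈ cube d 0) : ‖x‖ ≤ 1/2 := by
  have := cube_norm_upper h
  rw [norm_zero_lattice] at this
  linarith


open scoped Classical in
lemma lattice_tail (d : ℕ) (β : ℝ) (hβ : (d : ℝ) < β) :
    ∃ C : ℝ≥0∞, C ≠ ∞ ∧ ∀ S : ℝ, 1 ≤ S →
      ∑' j : Fin d → ℤ, (if S ≤ ‖j‖ then ENNReal.ofReal (‖j‖ ^ (-β)) else 0)
        ≤ C * ENNReal.ofReal (S ^ ((d : ℝ) - β)) := by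
  set r : ℝ≥0∞ := ENNReal.ofReal ((2:ℝ) ^ ((d : ℝ) - β)) with hr_def
  have hrlt : r < 1 := by
    rw [hr_def, ENNReal.ofReal_lt_one]
    exact Real.rpow_lt_one_of_one_lt_of_neg one_lt_two (by linarith)
  have hrne : (1 - r)⁻¹ ≠ ∞ := by
    rw [ENNReal.inv_ne_top]
    simp [tsub_eq_zero_iff_le, not_le, hrlt]
  refine ⟨ENNReal.ofReal ((4:ℝ) ^ d * 2 ^ (β - (d:ℝ))) * (1 - r)⁻¹, by
    exact ENNReal.mul_ne_top ENNReal.ofReal_ne_top hrne, ?_⟩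
  intro S hS
  -- fiber decomposition by dyadic scale
  set K : (Fin d → ℤ) → ℕ := fun j => Nat.log 2 (natNorm j) with hK
  set F : (Fin d → ℤ) → ℝ≥0∞ :=
    fun j => if S ≤ ‖j‖ then ENNReal.ofReal (‖j‖ ^ (-β)) else 0 with hF
  have hfiber : ∑' j, F j = ∑' (k : ℕ) (p : {j : Fin d → ℤ // K j = k}), F p.1 := by
    rw [← (Equiv.sigmaFiberEquiv K).tsum_eq F]
    exact ENNReal.tsum_sigma (fun k (p : {j : Fin d → ℤ // K j = k}) => F p.1)
  rw [hfiber]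
  -- the threshold k₀
  set k₀ : ℕ := Nat.log 2 ⌊S⌋₊ with hk₀
  have hfl1 : 1 ≤ ⌊S⌋₊ := Nat.le_floor (by exact_mod_cast hS)
  have h2k₀ : S / 2 < (2:ℝ) ^ k₀ := by
    have h1 : ⌊S⌋₊ < 2 ^ (k₀ + 1) := Nat.lt_pow_succ_log_self one_lt_two _
    have h2 : S < (⌊S⌋₊ : ℝ) + 1 := Nat.lt_floor_add_one S
    have h3 : ((⌊S⌋₊ : ℝ) + 1) ≤ ((2:ℝ))^(k₀+1) := by
      have : (⌊S⌋₊ : ℕ) + 1 ≤ 2 ^ (k₀ + 1) := h1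
      exact_mod_cast this
    have : S < (2:ℝ) ^ (k₀ + 1) := lt_of_lt_of_le h2 h3
    rw [pow_succ] at this; linarith
  have hk₀le : (2:ℝ) ^ k₀ ≤ S := by
    have h1 : 2 ^ k₀ ≤ ⌊S⌋₊ := Nat.pow_log_le_self 2 (by omega)
    calc (2:ℝ) ^ k₀ ≤ (⌊S⌋₊:ℝ) := by exact_mod_cast h1
    _ ≤ S := Nat.floor_le (by linarith)
  -- per-fiber bound
  have hfiberle : ∀ k : ℕ, ∑' (p : {j : Fin d → ℤ // K j = k}), F p.1 ≤
      if k < k₀ then 0 else ENNReal.ofReal ((4:ℝ)^d) * r ^ k := by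
    intro k
    -- every fiber member is in the ball of radius 2^(k+1) - 1
    have hmem : ∀ p : {j : Fin d → ℤ // K j = k}, natNorm p.1 < 2 ^ (k + 1) := by
      intro p
      have := Nat.lt_pow_succ_log_self (b := 2) one_lt_two (natNorm p.1)
      rwa [show Nat.log 2 (natNorm p.1) = k from p.2] at this
    have hcard : ∑' (p : {j : Fin d → ℤ // K j = k}), F p.1 ≤
        ((2:ℕ) ^ ((k + 2) * d) : ℕ) *
          (if (2:ℝ) ^ (k+1) ≤ S then 0 else ENNReal.ofReal (((2:ℝ)^k) ^ (-β))) := by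
      have hb : ∀ p : {j : Fin d → ℤ // K j = k}, F p.1 ≤
          (if (2:ℝ) ^ (k+1) ≤ S then 0 else ENNReal.ofReal (((2:ℝ)^k) ^ (-β))) := by
        intro p
        by_cases hcase : S ≤ ‖p.1‖
        · have h2k : (2:ℕ)^k ≤ natNorm p.1 := by
            have hne : natNorm p.1 ≠ 0 := by
              intro h0
              rw [norm_eq_natNorm, h0] at hcase; push_cast at hcase; linarith
            have := Nat.pow_log_le_self 2 hne
            rwa [show Nat.log 2 (natNorm p.1) = k from p.2] at this
          have hnotlt : ¬ ((2:ℝ) ^ (k+1) ≤ S) := by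
            have := hmem p
            rw [norm_eq_natNorm] at hcase
            have : (natNorm p.1 : ℝ) < (2:ℝ)^(k+1) := by exact_mod_cast hmem p
            push_neg; linarith
          rw [if_neg hnotlt, hF]
          simp only [if_pos hcase]
          apply ENNReal.ofReal_le_ofReal
          apply Real.rpow_le_rpow_of_nonpos (by positivity) ?_ (by linarith)
          rw [norm_eq_natNorm]
          exact_mod_cast h2k
        · rw [hF]; simp only [if_neg hcase]; exact zero_le
      refine tsum_le_card_mul ((ballF d (2^(k+1) - 1)).subtype _) _ _ ?_ hb |>.trans ?_
      · intro p hp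
        exfalso
        apply hp
        rw [Finset.mem_subtype, mem_ballF]
        have := hmem p
        omega
      · gcongr
        calc ((ballF d (2^(k+1) - 1)).subtype _).card
            ≤ (ballF d (2^(k+1) - 1)).card := by
              rw [Finset.card_subtype]; exact Finset.card_filter_le _ _
        _ = (2 * (2^(k+1) - 1) + 1) ^ d := card_ballF _ _
        _ ≤ (2:ℕ) ^ ((k + 2) * d) := by
              rw [pow_mul]
              apply Nat.pow_le_pow_left
              have : 1 ≤ (2:ℕ)^(k+1) := Nat.one_le_two_pow
              calc 2 * (2^(k+1) - 1) + 1 ≤ 2 * 2^(k+1) := by omega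
              _ = 2 ^ (k+2) := by ring
    refine hcard.trans ?_
    by_cases hk : k < k₀
    · rw [if_pos hk]
      have : (2:ℝ) ^ (k+1) ≤ S := by
        calc (2:ℝ) ^ (k+1) ≤ (2:ℝ) ^ k₀ := by
              apply pow_le_pow_right₀ one_le_two; omega
        _ ≤ S := hk₀le
      rw [if_pos this, mul_zero]
    · rw [if_neg hk]
      by_cases h2 : (2:ℝ) ^ (k+1) ≤ S
      · rw [if_pos h2, mul_zero]; exact zero_le
      · rw [if_neg h2]
        -- (2^((k+2)d)) * (2^k)^(-β) = 4^d * (2^(d-β))^k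
        have hre : ((2 ^ ((k + 2) * d) : ℕ) : ℝ) * ((2:ℝ)^k) ^ (-β)
            = (4:ℝ)^d * ((2:ℝ) ^ ((d:ℝ) - β)) ^ k := by
          push_cast
          rw [← Real.rpow_natCast (2:ℝ) ((k+2)*d), ← Real.rpow_natCast (2:ℝ) k,
            ← Real.rpow_mul (by norm_num) (k:ℝ) (-β),
            ← Real.rpow_natCast ((2:ℝ) ^ ((d:ℝ) - β)) k,
            ← Real.rpow_mul (by norm_num) ((d:ℝ) - β) (k:ℝ),
            ← Real.rpow_natCast (4:ℝ) d,
            show (4:ℝ) = (2:ℝ)^(2:ℝ) by norm_num [Real.rpow_natCast]]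
          rw [← Real.rpow_mul (by norm_num) 2 (d:ℝ),
            ← Real.rpow_add (by norm_num), ← Real.rpow_add (by norm_num)]
          congr 1
          push_cast
          ring
        calc (((2 ^ ((k + 2) * d) : ℕ)) : ℝ≥0∞) * ENNReal.ofReal (((2:ℝ)^k) ^ (-β))
            = ENNReal.ofReal (((2 ^ ((k + 2) * d) : ℕ) : ℝ)) *
                ENNReal.ofReal (((2:ℝ)^k) ^ (-β)) := by rw [ENNReal.ofReal_natCast]
        _ = ENNReal.ofReal (((2 ^ ((k + 2) * d) : ℕ) : ℝ) * ((2:ℝ)^k) ^ (-β)) :=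
              (ENNReal.ofReal_mul (by positivity)).symm
        _ = ENNReal.ofReal ((4:ℝ)^d * ((2:ℝ) ^ ((d:ℝ) - β)) ^ k) := by rw [hre]
        _ = ENNReal.ofReal ((4:ℝ)^d) * r ^ k := by
              rw [ENNReal.ofReal_mul (by positivity),
                ENNReal.ofReal_pow (p := (2:ℝ) ^ ((d:ℝ) - β)) (by positivity)]
        _ ≤ ENNReal.ofReal ((4:ℝ)^d) * r ^ k := le_rfl
  calc ∑' (k : ℕ) (p : {j : Fin d → ℤ // K j = k}), F p.1
      ≤ ∑' (k : ℕ), (if k < k₀ then 0 else ENNReal.ofReal ((4:ℝ)^d) * r ^ k) :=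
        ENNReal.tsum_le_tsum hfiberle
  _ = ∑' (m : ℕ), ENNReal.ofReal ((4:ℝ)^d) * r ^ (m + k₀) := tsum_ite_shift k₀ _
  _ = ENNReal.ofReal ((4:ℝ)^d) * r ^ k₀ * (1 - r)⁻¹ := by
        simp only [pow_add, ← mul_assoc]
        rw [ENNReal.tsum_mul_right, ENNReal.tsum_mul_left, tsum_geometric]
        ring
  _ ≤ ENNReal.ofReal ((4:ℝ) ^ d * 2 ^ (β - (d:ℝ))) * (1 - r)⁻¹ *
        ENNReal.ofReal (S ^ ((d : ℝ) - β)) := by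
        rw [ENNReal.ofReal_mul (by positivity)]
        have hr_pow : r ^ k₀ ≤ ENNReal.ofReal ((2:ℝ) ^ (β - (d:ℝ)) * S ^ ((d:ℝ) - β)) := by
          rw [hr_def, ← ENNReal.ofReal_pow (by positivity)]
          apply ENNReal.ofReal_le_ofReal
          rw [← Real.rpow_natCast ((2:ℝ) ^ ((d:ℝ) - β)) k₀,
            ← Real.rpow_mul (by norm_num)]
          have h1 : ((2:ℝ) ^ (k₀:ℕ) : ℝ) ^ ((d:ℝ) - β) = (2:ℝ) ^ (((d:ℝ) - β) * k₀) := by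
            rw [← Real.rpow_natCast (2:ℝ) k₀, ← Real.rpow_mul (by norm_num)]
            ring_nf
          rw [← h1]
          calc ((2:ℝ) ^ (k₀:ℕ)) ^ ((d:ℝ) - β) ≤ (S / 2) ^ ((d:ℝ) - β) := by
                apply Real.rpow_le_rpow_of_nonpos (by linarith) (le_of_lt h2k₀) (by linarith)
          _ = (2:ℝ) ^ (β - (d:ℝ)) * S ^ ((d:ℝ) - β) := by
                rw [Real.div_rpow (by linarith) (by norm_num),
                  div_eq_mul_inv, ← Real.rpow_neg (by norm_num)]
                ring_nf
        calc ENNReal.ofReal ((4:ℝ)^d) * r ^ k₀ * (1 - r)⁻¹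
            ≤ ENNReal.ofReal ((4:ℝ)^d) *
                ENNReal.ofReal ((2:ℝ) ^ (β - (d:ℝ)) * S ^ ((d:ℝ) - β)) * (1 - r)⁻¹ := by
              gcongr
        _ = ENNReal.ofReal ((4:ℝ)^d) * ENNReal.ofReal ((2:ℝ) ^ (β - (d:ℝ))) *
              ENNReal.ofReal (S ^ ((d:ℝ) - β)) * (1 - r)⁻¹ := by
              rw [ENNReal.ofReal_mul (by positivity)]; ring
        _ = ENNReal.ofReal ((4:ℝ)^d) * ENNReal.ofReal ((2:ℝ) ^ (β - (d:ℝ))) * (1 - r)⁻¹ *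
              ENNReal.ofReal (S ^ ((d:ℝ) - β)) := by ring
open scoped Classical in
lemma lattice_inv_sum (d : ℕ) (α : ℝ) (hα : 0 < α) (hd : (d : ℝ) < α) :
    ∃ C : ℝ≥0∞, C ≠ ∞ ∧ ∀ T : ℝ, 1 ≤ T →
      ∑' j : Fin d → ℤ, ENNReal.ofReal (1 / (max (‖j‖ - 1) 0 ^ α + T))
        ≤ C * ENNReal.ofReal (T ^ ((d : ℝ)/α - 1)) := by
  obtain ⟨C₀, hC₀, hcore⟩ := lattice_tail d α hd
  refine ⟨ENNReal.ofReal ((3:ℝ)^d) + ENNReal.ofReal ((2:ℝ)^α) * C₀,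
    by exact ENNReal.add_ne_top.mpr ⟨ENNReal.ofReal_ne_top,
      ENNReal.mul_ne_top ENNReal.ofReal_ne_top hC₀⟩, ?_⟩
  intro T hT
  have hT0 : (0:ℝ) < T := by linarith
  set S : ℝ := T ^ (α⁻¹ : ℝ) with hSdef
  have hS1 : 1 ≤ S := by
    rw [hSdef]
    calc (1:ℝ) = 1 ^ (α⁻¹ : ℝ) := (Real.one_rpow _).symm
    _ ≤ T ^ (α⁻¹ : ℝ) := Real.rpow_le_rpow (by norm_num) hT (by positivity)
  set G : (Fin d → ℤ) → ℝ≥0∞ :=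
    fun j => ENNReal.ofReal (1 / (max (‖j‖ - 1) 0 ^ α + T)) with hG
  have hsplit : ∀ j, G j = (if ‖j‖ ≤ S then G j else 0) +
      (if ‖j‖ ≤ S then 0 else G j) := by intro j; split <;> simp
  rw [tsum_congr hsplit, ENNReal.tsum_add]
  have hnear : ∑' j, (if ‖j‖ ≤ S then G j else 0)
      ≤ ENNReal.ofReal ((3:ℝ)^d) * ENNReal.ofReal (T ^ ((d : ℝ)/α - 1)) := by
    have hcm := tsum_le_card_mul (ballF d ⌊S⌋₊)
      (fun j => if ‖j‖ ≤ S then G j else 0) (ENNReal.ofReal (1/T)) ?_ ?_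
    · refine hcm.trans ?_
      rw [card_ballF]
      calc ((2 * ⌊S⌋₊ + 1) ^ d : ℕ) * ENNReal.ofReal (1/T)
          = ENNReal.ofReal (((2 * ⌊S⌋₊ + 1) ^ d : ℕ) : ℝ) * ENNReal.ofReal (1/T) := by
            rw [ENNReal.ofReal_natCast]
      _ ≤ ENNReal.ofReal ((3*S) ^ d) * ENNReal.ofReal (1/T) := by
            gcongr
            push_cast
            have h1 : (⌊S⌋₊ : ℝ) ≤ S := Nat.floor_le (by linarith)
            have h2 : (2 * (⌊S⌋₊:ℝ) + 1) ≤ 3 * S := by linarith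
            exact pow_le_pow_left₀ (by positivity) h2 d
      _ = ENNReal.ofReal ((3*S)^d * (1/T)) := (ENNReal.ofReal_mul (by positivity)).symm
      _ = ENNReal.ofReal ((3:ℝ)^d) * ENNReal.ofReal (T ^ ((d : ℝ)/α - 1)) := by
            rw [← ENNReal.ofReal_mul (by positivity)]
            congr 1
            rw [mul_pow]
            have hSd : S ^ (d:ℕ) = T ^ ((d:ℝ)/α) := by
              rw [hSdef, ← Real.rpow_natCast (T ^ (α⁻¹:ℝ)) d,
                ← Real.rpow_mul (le_of_lt hT0)]
              congr 1
              field_simp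
            rw [hSd, Real.rpow_sub hT0]
            field_simp
            simp
    · -- support in ball
      intro j hj
      show (if ‖j‖ ≤ S then G j else 0) = 0
      rw [mem_ballF] at hj
      have : S < ‖j‖ := by
        rw [norm_eq_natNorm]
        have h2 : ⌊S⌋₊ + 1 ≤ natNorm j := by omega
        calc S < (⌊S⌋₊:ℝ) + 1 := Nat.lt_floor_add_one S
        _ ≤ (natNorm j : ℝ) := by exact_mod_cast h2
      rw [if_neg (not_le.mpr this)]
    · -- bound by 1/T
      intro j
      show (if ‖j‖ ≤ S then G j else 0) ≤ ENNReal.ofReal (1/T)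
      split
      · rw [hG]
        apply ENNReal.ofReal_le_ofReal
        apply one_div_le_one_div_of_le hT0
        have : (0:ℝ) ≤ max (‖j‖ - 1) 0 ^ α := Real.rpow_nonneg (le_max_right _ _) _
        linarith
      · exact zero_le
  have hfar : ∑' j, (if ‖j‖ ≤ S then 0 else G j)
      ≤ ENNReal.ofReal ((2:ℝ)^α) * C₀ * ENNReal.ofReal (T ^ ((d : ℝ)/α - 1)) := by
    have hterm : ∀ j : Fin d → ℤ, (if ‖j‖ ≤ S then 0 else G j)
        ≤ ENNReal.ofReal ((2:ℝ)^α) *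
          (if S ≤ ‖j‖ then ENNReal.ofReal (‖j‖ ^ (-α)) else 0) := by
      intro j
      by_cases hle : ‖j‖ ≤ S
      · rw [if_pos hle]; exact zero_le
      · push_neg at hle
        rw [if_neg (not_le.mpr hle), if_pos (le_of_lt hle), hG]
        rw [← ENNReal.ofReal_mul (by positivity)]
        apply ENNReal.ofReal_le_ofReal
        have hj2 : (2:ℝ) ≤ ‖j‖ := by
          rw [norm_eq_natNorm] at hle ⊢
          have : 1 < (natNorm j : ℝ) := lt_of_le_of_lt hS1 hle
          have : 1 < natNorm j := by exact_mod_cast this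
          have : 2 ≤ natNorm j := this
          exact_mod_cast this
        have hmax : max (‖j‖ - 1) 0 = ‖j‖ - 1 := max_eq_left (by linarith)
        have hhalf : ‖j‖ / 2 ≤ ‖j‖ - 1 := by linarith
        have hd2 : (‖j‖/2) ^ α ≤ max (‖j‖ - 1) 0 ^ α := by
          rw [hmax]
          exact Real.rpow_le_rpow (by linarith) hhalf (le_of_lt hα)
        calc 1 / (max (‖j‖ - 1) 0 ^ α + T) ≤ 1 / ((‖j‖/2) ^ α) := by
              apply one_div_le_one_div_of_le (by positivity)
              linarith
        _ = (2:ℝ)^α * ‖j‖ ^ (-α) := by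
              rw [Real.rpow_neg (by linarith), Real.div_rpow (by linarith) (by norm_num)]
              field_simp
    calc ∑' j, (if ‖j‖ ≤ S then 0 else G j)
        ≤ ∑' j : Fin d → ℤ, ENNReal.ofReal ((2:ℝ)^α) *
            (if S ≤ ‖j‖ then ENNReal.ofReal (‖j‖ ^ (-α)) else 0) :=
          ENNReal.tsum_le_tsum hterm
    _ = ENNReal.ofReal ((2:ℝ)^α) *
          ∑' j : Fin d → ℤ, (if S ≤ ‖j‖ then ENNReal.ofReal (‖j‖ ^ (-α)) else 0) :=
          ENNReal.tsum_mul_left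
    _ ≤ ENNReal.ofReal ((2:ℝ)^α) * (C₀ * ENNReal.ofReal (S ^ ((d : ℝ) - α))) := by
          gcongr
          exact hcore S hS1
    _ = ENNReal.ofReal ((2:ℝ)^α) * C₀ * ENNReal.ofReal (T ^ ((d : ℝ)/α - 1)) := by
          rw [hSdef, ← Real.rpow_mul (le_of_lt hT0)]
          rw [show (α⁻¹ * ((d:ℝ) - α)) = (d:ℝ)/α - 1 by field_simp]
          ring
  calc _ ≤ ENNReal.ofReal ((3:ℝ)^d) * ENNReal.ofReal (T ^ ((d : ℝ)/α - 1)) +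
        ENNReal.ofReal ((2:ℝ)^α) * C₀ * ENNReal.ofReal (T ^ ((d : ℝ)/α - 1)) :=
        add_le_add hnear hfar
  _ = (ENNReal.ofReal ((3:ℝ)^d) + ENNReal.ofReal ((2:ℝ)^α) * C₀) *
        ENNReal.ofReal (T ^ ((d : ℝ)/α - 1)) := by ring

open scoped Classical in
lemma part_i (d₁ d₂ : ℕ) (f : (Fin d₁ → ℝ) × (Fin d₂ → ℝ) → ℝ)
    (R : ℝ)
    (ν : Measure ((Fin d₁ → ℝ) × (Fin d₂ → ℝ)))
    (hν : ∀ j, ν (cubeP d₁ d₂ j) ≤ 1)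
    (x : (Fin d₁ → ℝ) × (Fin d₂ → ℝ)) :
    (∫⁻ y in {y : (Fin d₁ → ℝ) × (Fin d₂ → ℝ) | R < ‖y.2‖},
        ENNReal.ofReal (f (x - y)) ∂ν) ≤ VR d₁ d₂ f R x := by
  set T : Set ((Fin d₁ → ℤ) × (Fin d₂ → ℤ)) := {j | R - 1 < ‖j.2‖} with hT
  have hsub : {y : (Fin d₁ → ℝ) × (Fin d₂ → ℝ) | R < ‖y.2‖} ⊆
      ⋃ (j : T), cubeP d₁ d₂ j := by
    intro y hy
    set j : (Fin d₁ → ℤ) × (Fin d₂ → ℤ) :=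
      (fun i => ⌊y.1 i + 1/2⌋, fun i => ⌊y.2 i + 1/2⌋) with hj
    have hmem : y ∈ cubeP d₁ d₂ j :=
      Set.mem_prod.mpr ⟨mem_cube_floor y.1, mem_cube_floor y.2⟩
    have hy' : R < ‖y.2‖ := hy
    have hup : ‖y.2‖ ≤ ‖j.2‖ + 1/2 := cube_norm_upper (Set.mem_prod.mp hmem).2
    have hjT : j ∈ T := by
      rw [hT, Set.mem_setOf_eq]
      linarith
    exact Set.mem_iUnion.mpr ⟨⟨j, hjT⟩, hmem⟩
  calc ∫⁻ y in {y : (Fin d₁ → ℝ) × (Fin d₂ → ℝ) | R < ‖y.2‖},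
        ENNReal.ofReal (f (x - y)) ∂ν
      ≤ ∫⁻ y in ⋃ (j : T), cubeP d₁ d₂ j, ENNReal.ofReal (f (x - y)) ∂ν :=
        lintegral_mono_set hsub
  _ ≤ ∑' (j : T), ∫⁻ y in cubeP d₁ d₂ j, ENNReal.ofReal (f (x - y)) ∂ν :=
        lintegral_iUnion_le _ _
  _ ≤ ∑' (j : T), ⨆ y ∈ cubeP d₁ d₂ (j : (Fin d₁ → ℤ) × (Fin d₂ → ℤ)),
        ENNReal.ofReal (f (x - y)) := by
        apply ENNReal.tsum_le_tsum
        intro j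
        calc ∫⁻ y in cubeP d₁ d₂ j, ENNReal.ofReal (f (x - y)) ∂ν
            ≤ ∫⁻ _ in cubeP d₁ d₂ j,
                (⨆ z ∈ cubeP d₁ d₂ (j : (Fin d₁ → ℤ) × (Fin d₂ → ℤ)),
                  ENNReal.ofReal (f (x - z))) ∂ν :=
              setLIntegral_mono' (cubeP_measurable _ _ _)
                (fun y hy =>
                  le_iSup₂ (f := fun z (_ : z ∈ cubeP d₁ d₂ (j:(Fin d₁ → ℤ) × (Fin d₂ → ℤ))) =>
                    ENNReal.ofReal (f (x - z))) y hy)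
        _ = (⨆ z ∈ cubeP d₁ d₂ (j : (Fin d₁ → ℤ) × (Fin d₂ → ℤ)),
              ENNReal.ofReal (f (x - z))) * ν (cubeP d₁ d₂ j) := setLIntegral_const _ _
        _ ≤ (⨆ z ∈ cubeP d₁ d₂ (j : (Fin d₁ → ℤ) × (Fin d₂ → ℤ)),
              ENNReal.ofReal (f (x - z))) * 1 := by gcongr; exact hν _
        _ = _ := mul_one _
  _ ≤ VR d₁ d₂ f R x := by
        rw [VR, tsum_subtype T
          (fun j => ⨆ y ∈ cubeP d₁ d₂ j, ENNReal.ofReal (f (x - y)))]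
        apply ENNReal.tsum_le_tsum
        intro j
        rw [Set.indicator_apply]
        split_ifs with h1 h2
        · exact le_rfl
        · exact absurd h1 h2
        · exact zero_le
        · exact le_rfl

open scoped Classical in
lemma part_ii (d₁ d₂ : ℕ)
    (f : (Fin d₁ → ℝ) × (Fin d₂ → ℝ) → ℝ)
    (α₁ α₂ : ℝ) (hα₁ : 0 < α₁) (hα₂ : 0 < α₂)
    (hγ : (d₁ : ℝ) / α₁ + (d₂ : ℝ) / α₂ < 1)
    (f₀ r₀ : ℝ) (hf₀ : 0 < f₀) (hr₀ : 0 < r₀)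
    (h_upp : ∀ x : (Fin d₁ → ℝ) × (Fin d₂ → ℝ), r₀ ≤ max ‖x.1‖ ‖x.2‖ →
      f x ≤ f₀ / (‖x.1‖ ^ α₁ + ‖x.2‖ ^ α₂)) :
    ∃ c R₀ : ℝ, 0 < c ∧ 1 < R₀ ∧
      ∀ R : ℝ, R₀ ≤ R → ∀ x ∈ cubeP d₁ d₂ 0,
        VR d₁ d₂ f R x ≤
          ENNReal.ofReal (c *
            R ^ (-(α₂ * (1 - ((d₁ : ℝ) / α₁ + (d₂ : ℝ) / α₂))))) := by
  have hγ₂0 : (0:ℝ) ≤ (d₂ : ℝ) / α₂ := by positivity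
  have hγ₁ : (d₁:ℝ)/α₁ < 1 := by linarith
  have hd₁α : (d₁:ℝ) < α₁ := (div_lt_one hα₁).mp hγ₁
  set β' : ℝ := α₂ * (1 - (d₁:ℝ)/α₁) with hβ'
  have hβ'pos : 0 < β' := by
    rw [hβ']; apply mul_pos hα₂; linarith
  have hd₂β : (d₂:ℝ) < β' := by
    rw [hβ']
    have h1 : (d₂:ℝ)/α₂ < 1 - (d₁:ℝ)/α₁ := by linarith
    calc (d₂:ℝ) = α₂ * ((d₂:ℝ)/α₂) := by field_simp
    _ < α₂ * (1 - (d₁:ℝ)/α₁) := by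
        exact mul_lt_mul_of_pos_left h1 hα₂
  obtain ⟨C₁, hC₁, hB⟩ := lattice_inv_sum d₁ α₁ hα₁ hd₁α
  obtain ⟨C₂, hC₂, hCo⟩ := lattice_tail d₂ β' hd₂β
  set K : ℝ≥0∞ := ENNReal.ofReal f₀ * C₁ * ENNReal.ofReal ((2:ℝ)^β') with hK
  set Ctot : ℝ≥0∞ := K * C₂ * ENNReal.ofReal ((2:ℝ)^(β' - (d₂:ℝ))) with hCtot_def
  have hKne : K ≠ ∞ :=
    ENNReal.mul_ne_top (ENNReal.mul_ne_top ENNReal.ofReal_ne_top hC₁) ENNReal.ofReal_ne_top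
  have hCtot : Ctot ≠ ∞ :=
    ENNReal.mul_ne_top (ENNReal.mul_ne_top hKne hC₂) ENNReal.ofReal_ne_top
  have hexp : (d₂:ℝ) - β' = -(α₂ * (1 - ((d₁ : ℝ) / α₁ + (d₂ : ℝ) / α₂))) := by
    rw [hβ']
    have hα₂' : α₂ ≠ 0 := ne_of_gt hα₂
    field_simp
    ring
  refine ⟨Ctot.toReal + 1, max (r₀ + 3) 4, by positivity,
    lt_of_lt_of_le (by norm_num) (le_max_right _ _), ?_⟩
  intro R hR x hx
  have hR4 : (4:ℝ) ≤ R := le_trans (le_max_right _ _) hR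
  have hRr : r₀ + 3 ≤ R := le_trans (le_max_left _ _) hR
  have hx1 : ‖x.1‖ ≤ 1/2 := mem_cube_zero_norm hx.1
  have hx2 : ‖x.2‖ ≤ 1/2 := mem_cube_zero_norm hx.2
  -- Step 1: termwise bound on the sups
  have hstep1 : VR d₁ d₂ f R x ≤ ∑' j : (Fin d₁ → ℤ) × (Fin d₂ → ℤ),
      (if R - 1 < ‖j.2‖ then
        ENNReal.ofReal (f₀ * (1 / (max (‖j.1‖ - 1) 0 ^ α₁ + (‖j.2‖ - 1) ^ α₂)))
      else 0) := by
    rw [VR]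
    apply ENNReal.tsum_le_tsum
    intro j
    split_ifs with hcond
    · apply iSup₂_le
      intro y hy
      have h1 : ‖j.1‖ - 1 ≤ ‖x.1 - y.1‖ := cube_sub_lower hy.1 hx1
      have h2 : ‖j.2‖ - 1 ≤ ‖x.2 - y.2‖ := cube_sub_lower hy.2 hx2
      have hj2 : (3:ℝ) ≤ ‖j.2‖ := by linarith
      have hr₀le : r₀ ≤ ‖x.2 - y.2‖ := by linarith
      apply ENNReal.ofReal_le_ofReal
      have hsub1 : (x - y).1 = x.1 - y.1 := rfl
      have hsub2 : (x - y).2 = x.2 - y.2 := rfl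
      have hupp := h_upp (x - y) (by rw [hsub2]; exact le_trans hr₀le (le_max_right _ _))
      rw [hsub1, hsub2] at hupp
      refine hupp.trans ?_
      rw [← div_eq_mul_one_div]
      have hA : max (‖j.1‖ - 1) 0 ^ α₁ ≤ ‖x.1 - y.1‖ ^ α₁ := by
        apply Real.rpow_le_rpow (le_max_right _ _) _ (le_of_lt hα₁)
        exact max_le h1 (norm_nonneg _)
      have hBB : (‖j.2‖ - 1) ^ α₂ ≤ ‖x.2 - y.2‖ ^ α₂ :=
        Real.rpow_le_rpow (by linarith) h2 (le_of_lt hα₂)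
      have hBpos : (0:ℝ) < (‖j.2‖ - 1) ^ α₂ := Real.rpow_pos_of_pos (by linarith) _
      have hApos : (0:ℝ) ≤ max (‖j.1‖ - 1) 0 ^ α₁ := Real.rpow_nonneg (le_max_right _ _) _
      rw [div_eq_mul_one_div]
      apply mul_le_mul_of_nonneg_left _ (le_of_lt hf₀)
      rw [inv_eq_one_div]
      apply one_div_le_one_div_of_le (by linarith)
      linarith
    · exact le_rfl
  -- Step 2: double sum reorganisation and inner bound
  have hstep2 : ∑' j : (Fin d₁ → ℤ) × (Fin d₂ → ℤ),
      (if R - 1 < ‖j.2‖ then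
        ENNReal.ofReal (f₀ * (1 / (max (‖j.1‖ - 1) 0 ^ α₁ + (‖j.2‖ - 1) ^ α₂)))
      else 0)
      = ∑' j₂ : Fin d₂ → ℤ, ∑' j₁ : Fin d₁ → ℤ,
        (if R - 1 < ‖j₂‖ then
          ENNReal.ofReal (f₀ * (1 / (max (‖j₁‖ - 1) 0 ^ α₁ + (‖j₂‖ - 1) ^ α₂)))
        else 0) := by
    rw [ENNReal.tsum_prod (f := fun (j₁ : Fin d₁ → ℤ) (j₂ : Fin d₂ → ℤ) =>
      if R - 1 < ‖j₂‖ then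
        ENNReal.ofReal (f₀ * (1 / (max (‖j₁‖ - 1) 0 ^ α₁ + (‖j₂‖ - 1) ^ α₂)))
      else 0)]
    exact ENNReal.tsum_comm
  have hinner : ∀ j₂ : Fin d₂ → ℤ, ∑' j₁ : Fin d₁ → ℤ,
      (if R - 1 < ‖j₂‖ then
        ENNReal.ofReal (f₀ * (1 / (max (‖j₁‖ - 1) 0 ^ α₁ + (‖j₂‖ - 1) ^ α₂)))
      else 0)
      ≤ K * (if R - 1 ≤ ‖j₂‖ then ENNReal.ofReal (‖j₂‖ ^ (-β')) else 0) := by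
    intro j₂
    by_cases hcond : R - 1 < ‖j₂‖
    · simp only [if_pos hcond, if_pos (le_of_lt hcond)]
      have hj2 : (3:ℝ) ≤ ‖j₂‖ := by linarith
      set B : ℝ := (‖j₂‖ - 1) ^ α₂ with hBdef
      have hB1 : 1 ≤ B := Real.one_le_rpow (by linarith) (le_of_lt hα₂)
      calc ∑' j₁ : Fin d₁ → ℤ,
            ENNReal.ofReal (f₀ * (1 / (max (‖j₁‖ - 1) 0 ^ α₁ + B)))
          = ENNReal.ofReal f₀ * ∑' j₁ : Fin d₁ → ℤ,
            ENNReal.ofReal (1 / (max (‖j₁‖ - 1) 0 ^ α₁ + B)) := by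
            rw [← ENNReal.tsum_mul_left]
            exact tsum_congr fun j₁ => ENNReal.ofReal_mul (le_of_lt hf₀)
      _ ≤ ENNReal.ofReal f₀ * (C₁ * ENNReal.ofReal (B ^ ((d₁:ℝ)/α₁ - 1))) := by
            gcongr
            exact hB B hB1
      _ ≤ K * ENNReal.ofReal (‖j₂‖ ^ (-β')) := by
            rw [hK]
            have hBexp : B ^ ((d₁:ℝ)/α₁ - 1) = (‖j₂‖ - 1) ^ (-β') := by
              rw [hBdef, ← Real.rpow_mul (by linarith : (0:ℝ) ≤ ‖j₂‖ - 1)]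
              congr 1
              rw [hβ']; ring
            have hhalf : ‖j₂‖/2 ≤ ‖j₂‖ - 1 := by linarith
            have hmono : (‖j₂‖ - 1) ^ (-β') ≤ (‖j₂‖/2) ^ (-β') :=
              Real.rpow_le_rpow_of_nonpos (by linarith) hhalf (by linarith)
            have hsplit : (‖j₂‖/2) ^ (-β') = (2:ℝ)^β' * ‖j₂‖ ^ (-β') := by
              rw [Real.rpow_neg (by positivity), Real.div_rpow (by linarith) (by norm_num),
                Real.rpow_neg (by linarith)]
              field_simp
            calc ENNReal.ofReal f₀ * (C₁ * ENNReal.ofReal (B ^ ((d₁:ℝ)/α₁ - 1)))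
                ≤ ENNReal.ofReal f₀ * (C₁ *
                    ENNReal.ofReal ((2:ℝ)^β' * ‖j₂‖ ^ (-β'))) := by
                  gcongr
                  rw [hBexp]
                  rw [hsplit] at hmono
                  exact hmono
            _ = ENNReal.ofReal f₀ * C₁ * ENNReal.ofReal ((2:ℝ)^β') *
                  ENNReal.ofReal (‖j₂‖ ^ (-β')) := by
                  rw [ENNReal.ofReal_mul (by positivity)]; ring
    · simp only [if_neg hcond]
      simp only [tsum_zero]
      exact zero_le
  -- Step 3: outer sum
  have houter : ∑' j₂ : Fin d₂ → ℤ,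
      (if R - 1 ≤ ‖j₂‖ then ENNReal.ofReal (‖j₂‖ ^ (-β')) else 0)
      ≤ C₂ * ENNReal.ofReal ((R-1) ^ ((d₂:ℝ) - β')) := hCo (R-1) (by linarith)
  have hfinal : VR d₁ d₂ f R x ≤ Ctot * ENNReal.ofReal (R ^ ((d₂:ℝ) - β')) := by
    calc VR d₁ d₂ f R x ≤ _ := hstep1
    _ = _ := hstep2
    _ ≤ ∑' j₂ : Fin d₂ → ℤ,
          K * (if R - 1 ≤ ‖j₂‖ then ENNReal.ofReal (‖j₂‖ ^ (-β')) else 0) :=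
        ENNReal.tsum_le_tsum hinner
    _ = K * ∑' j₂ : Fin d₂ → ℤ,
          (if R - 1 ≤ ‖j₂‖ then ENNReal.ofReal (‖j₂‖ ^ (-β')) else 0) :=
        ENNReal.tsum_mul_left
    _ ≤ K * (C₂ * ENNReal.ofReal ((R-1) ^ ((d₂:ℝ) - β'))) := by gcongr
    _ ≤ K * (C₂ * ENNReal.ofReal ((2:ℝ)^(β' - (d₂:ℝ)) * R ^ ((d₂:ℝ) - β'))) := by
        gcongr
        have hhalf : R/2 ≤ R - 1 := by linarith
        have hmono : (R-1) ^ ((d₂:ℝ) - β') ≤ (R/2) ^ ((d₂:ℝ) - β') :=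
          Real.rpow_le_rpow_of_nonpos (by linarith) hhalf (by linarith)
        have hsplit : (R/2) ^ ((d₂:ℝ) - β') = (2:ℝ)^(β' - (d₂:ℝ)) * R ^ ((d₂:ℝ) - β') := by
          rw [Real.div_rpow (by linarith) (by norm_num)]
          rw [show (β' - (d₂:ℝ)) = -((d₂:ℝ) - β') by ring, Real.rpow_neg (by norm_num)]
          field_simp
        rw [← hsplit]
        exact hmono
    _ = Ctot * ENNReal.ofReal (R ^ ((d₂:ℝ) - β')) := by
        rw [hCtot_def, ENNReal.ofReal_mul (by positivity)]
        ring
  calc VR d₁ d₂ f R x ≤ Ctot * ENNReal.ofReal (R ^ ((d₂:ℝ) - β')) := hfinal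
  _ ≤ ENNReal.ofReal (Ctot.toReal + 1) * ENNReal.ofReal (R ^ ((d₂:ℝ) - β')) := by
      gcongr
      conv_lhs => rw [← ENNReal.ofReal_toReal hCtot]
      exact ENNReal.ofReal_le_ofReal (by linarith)
  _ = ENNReal.ofReal ((Ctot.toReal + 1) * R ^ ((d₂:ℝ) - β')) :=
      (ENNReal.ofReal_mul (by positivity)).symm
  _ = ENNReal.ofReal ((Ctot.toReal + 1) *
        R ^ (-(α₂ * (1 - ((d₁ : ℝ) / α₁ + (d₂ : ℝ) / α₂))))) := by rw [hexp]

end S8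

/-- (i) for every Borel measure `ν` with `ν(Λ_j) ≤ 1` for all `j` and
every `x`, `∫_{|y₂| > R} f(x-y) ν(dy) ≤ V_R(x)`; (ii) there are `c > 0`, `R₀ > 1` with
`sup_{x ∈ Λ₀} V_R(x) ≤ c · R^{-α₂(1-γ)}` for all `R ≥ R₀`. -/
theorem statement8 (d₁ d₂ : ℕ) (hd₁ : 0 < d₁) (hd₂ : 0 < d₂)
    (f : (Fin d₁ → ℝ) × (Fin d₂ → ℝ) → ℝ)
    (hf_meas : Measurable f) (hf_nonneg : ∀ x, 0 ≤ f x)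
    (α₁ α₂ : ℝ) (hα₁ : 0 < α₁) (hα₂ : 0 < α₂)
    (hγ : (d₁ : ℝ) / α₁ + (d₂ : ℝ) / α₂ < 1)
    (f_u f₀ r₀ : ℝ) (hfu : 0 < f_u) (hf₀ : 0 < f₀) (hr₀ : 0 < r₀)
    (h_low : ∀ x : (Fin d₁ → ℝ) × (Fin d₂ → ℝ), r₀ ≤ max ‖x.1‖ ‖x.2‖ →
      ENNReal.ofReal (f_u / (‖x.1‖ ^ α₁ + ‖x.2‖ ^ α₂)) ≤
        ∫⁻ y in cubeP d₁ d₂ 0, ENNReal.ofReal (f (y - x)))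
    (h_upp : ∀ x : (Fin d₁ → ℝ) × (Fin d₂ → ℝ), r₀ ≤ max ‖x.1‖ ‖x.2‖ →
      f x ≤ f₀ / (‖x.1‖ ^ α₁ + ‖x.2‖ ^ α₂)) :
    (∀ R : ℝ, 1 < R →
      ∀ ν : Measure ((Fin d₁ → ℝ) × (Fin d₂ → ℝ)),
        (∀ j, ν (cubeP d₁ d₂ j) ≤ 1) →
        ∀ x : (Fin d₁ → ℝ) × (Fin d₂ → ℝ),
          (∫⁻ y in {y : (Fin d₁ → ℝ) × (Fin d₂ → ℝ) | R < ‖y.2‖},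
              ENNReal.ofReal (f (x - y)) ∂ν) ≤ VR d₁ d₂ f R x) ∧
    (∃ c R₀ : ℝ, 0 < c ∧ 1 < R₀ ∧
      ∀ R : ℝ, R₀ ≤ R → ∀ x ∈ cubeP d₁ d₂ 0,
        VR d₁ d₂ f R x ≤
          ENNReal.ofReal (c *
            R ^ (-(α₂ * (1 - ((d₁ : ℝ) / α₁ + (d₂ : ℝ) / α₂)))))) := by
  constructor
  · intro R _ ν hν x
    exact S8.part_i d₁ d₂ f R ν hν x
  · exact S8.part_ii d₁ d₂ f α₁ α₂ hα₁ hα₂ hγ f₀ r₀ hf₀ hr₀ h_upp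
end
end

section
/- Let U : ℝ^d → ℝ be ℤ^d-periodic and locally integrable, and let ψ : ℝ^d → (0,∞) be a continuously differentiable ℤ^d-periodic function which is a weak eigenfunction of −Δ + U with eigenvalue 0, i.e. ∫_{ℝ^d} (∇φ(x)·∇ψ(x) + U(x) φ(x) ψ(x)) dx = 0 for every continuously differentiable φ : ℝ^d → ℝ with compact support. Then there exist constants C₁, C₂ ∈ (0,∞), depending only on d and ψ, such that for every L > 1 and every nonnegative locally integrable V : ℝ^d → [0,∞), with Λ := {x ∈ ℝ^d : |x| < L/4} the open cube of side L/2, one has inf{ (∫_Λ (|∇φ(x)|² + (U(x) + V(x)) φ(x)²) dx) / (∫_Λ φ(x)² dx) : φ : ℝ^d → ℝ continuously differentiable, φ ≢ 0, with compact support contained in Λ } ≤ C₁ · |Λ|^{−1} ∫_Λ V(x) dx + C₂ · L^{−2}. -/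
open MeasureTheory ENNReal

set_option maxHeartbeats 1000000

noncomputable section

/-- The lattice point `j ∈ ℤ^d` viewed as a vector of `ℝ^d`. -/
def latVec (d : ℕ) (j : Fin d → ℤ) : Fin d → ℝ := fun i => (j i : ℝ)

theorem real_sInf_le_of_mem_of_le {S : Set ℝ} {a b : ℝ} (ha : a ∈ S) (hab : a ≤ b)
    (hb : 0 ≤ b) : sInf S ≤ b := by
  by_cases h : BddBelow S
  · exact (csInf_le h ha).trans hab
  · rw [Real.sInf_of_not_bddBelow h]; exact hb

/-- for a `ℤ^d`-periodic locally integrable `U` and a positive `C¹`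
`ℤ^d`-periodic weak eigenfunction `ψ` of `-Δ + U` with eigenvalue `0`, there are
`C₁, C₂ > 0` (depending only on `d` and `ψ`) such that for every `L > 1` and every
nonnegative locally integrable `V`, the infimum of the Rayleigh quotients over `C¹`
functions compactly supported in the open cube `Λ = {|x| < L/4}` is at most
`C₁ |Λ|⁻¹ ∫_Λ V + C₂ L⁻²`. -/
theorem statement12 (d : ℕ) (hd : 0 < d)
    (U : (Fin d → ℝ) → ℝ) (hU_loc : LocallyIntegrable U volume)
    (hU_per : ∀ (x : Fin d → ℝ) (j : Fin d → ℤ), U (x + latVec d j) = U x)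
    (ψ : (Fin d → ℝ) → ℝ) (hψ_C1 : ContDiff ℝ 1 ψ) (hψ_pos : ∀ x, 0 < ψ x)
    (hψ_per : ∀ (x : Fin d → ℝ) (j : Fin d → ℤ), ψ (x + latVec d j) = ψ x)
    (hweak : ∀ φ : (Fin d → ℝ) → ℝ, ContDiff ℝ 1 φ → HasCompactSupport φ →
      (∫ x : Fin d → ℝ,
        ((∑ i : Fin d, fderiv ℝ φ x (Pi.single i 1) * fderiv ℝ ψ x (Pi.single i 1)) +
          U x * φ x * ψ x)) = 0) :
    ∃ C₁ C₂ : ℝ, 0 < C₁ ∧ 0 < C₂ ∧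
      ∀ L : ℝ, 1 < L →
      ∀ V : (Fin d → ℝ) → ℝ, (∀ x, 0 ≤ V x) → LocallyIntegrable V volume →
        sInf {r : ℝ | ∃ φ : (Fin d → ℝ) → ℝ, ContDiff ℝ 1 φ ∧ HasCompactSupport φ ∧
            tsupport φ ⊆ {x : Fin d → ℝ | ‖x‖ < L / 4} ∧ φ ≠ 0 ∧
            r = (∫ x in {x : Fin d → ℝ | ‖x‖ < L / 4},
                  ((∑ i : Fin d, (fderiv ℝ φ x (Pi.single i 1)) ^ 2) +
                    (U x + V x) * φ x ^ 2)) /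
                ∫ x in {x : Fin d → ℝ | ‖x‖ < L / 4}, φ x ^ 2} ≤
          C₁ * ((volume {x : Fin d → ℝ | ‖x‖ < L / 4}).toReal)⁻¹ *
              (∫ x in {x : Fin d → ℝ | ‖x‖ < L / 4}, V x) +
            C₂ / L ^ 2 := by
  classical
  -- bounds for ψ
  obtain ⟨m, M, hm, hmψ, hψM⟩ : ∃ m M : ℝ, 0 < m ∧ (∀ x, m ≤ ψ x) ∧ (∀ x, ψ x ≤ M) := by
    have hcont : Continuous ψ := hψ_C1.continuous
    have hK : IsCompact (Set.Icc (0 : Fin d → ℝ) 1) := isCompact_Icc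
    have hne : (Set.Icc (0 : Fin d → ℝ) 1).Nonempty := ⟨0, le_refl _, zero_le_one⟩
    obtain ⟨a, ha, hamin⟩ := hK.exists_isMinOn hne hcont.continuousOn
    obtain ⟨b, hb, hbmax⟩ := hK.exists_isMaxOn hne hcont.continuousOn
    have hred : ∀ x : Fin d → ℝ, ∃ y ∈ Set.Icc (0 : Fin d → ℝ) 1, ψ x = ψ y := by
      intro x
      refine ⟨fun i => Int.fract (x i),
        ⟨fun i => Int.fract_nonneg _, fun i => (Int.fract_lt_one _).le⟩, ?_⟩
      have hx : x = (fun i => Int.fract (x i)) + latVec d (fun i => ⌊x i⌋) := by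
        funext i
        simp only [Pi.add_apply, latVec]
        exact (Int.fract_add_floor (x i)).symm
      conv_lhs => rw [hx]
      rw [hψ_per]
    refine ⟨ψ a, ψ b, hψ_pos a, fun x => ?_, fun x => ?_⟩
    · obtain ⟨y, hy, hxy⟩ := hred x; rw [hxy]; exact hamin hy
    · obtain ⟨y, hy, hxy⟩ := hred x; rw [hxy]; exact hbmax hy
  have hM : 0 < M := hm.trans_le ((hmψ 0).trans (hψM 0))
  -- a smooth bump function
  obtain ⟨η, hηsupp, hηcpt, hηsmooth, hηrange, hη0⟩ :=
    exists_contDiff_tsupport_subset (n := ⊤) (s := Metric.ball (0 : Fin d → ℝ) (1/2))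
      (Metric.ball_mem_nhds 0 (by norm_num))
  have hη1 : ContDiff ℝ 1 η := hηsmooth.of_le (by exact_mod_cast le_top)
  have hηdiff : Differentiable ℝ η := hη1.differentiable one_ne_zero
  have hηcont : Continuous η := hη1.continuous
  set A : ℝ := ∫ x, ∑ i : Fin d, (fderiv ℝ η x (Pi.single i 1)) ^ 2 with hAdef
  set B : ℝ := ∫ x, η x ^ 2 with hBdef
  have hη01 : ∀ x, 0 ≤ η x ∧ η x ≤ 1 := fun x =>
    ⟨(hηrange (Set.mem_range_self x)).1, (hηrange (Set.mem_range_self x)).2⟩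
  have hIη2 : Integrable (fun x => η x ^ 2) := by
    have hcs : HasCompactSupport (fun x : Fin d → ℝ => η x ^ 2) := by
      refine HasCompactSupport.intro hηcpt fun x hx => ?_
      simp [image_eq_zero_of_notMem_tsupport hx]
    exact (hηcont.pow 2).integrable_of_hasCompactSupport hcs
  have hB : 0 < B := by
    rw [hBdef, integral_pos_iff_support_of_nonneg (fun x => sq_nonneg _) hIη2]
    have hopen : IsOpen (Function.support fun x : Fin d → ℝ => η x ^ 2) := by
      have : (Function.support fun x : Fin d → ℝ => η x ^ 2) = η ⁻¹' {0}ᶜ := by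
        ext x; simp [Function.mem_support, pow_eq_zero_iff]
      rw [this]
      exact isOpen_compl_singleton.preimage hηcont
    refine hopen.measure_pos volume ⟨0, ?_⟩
    simp [Function.mem_support, hη0]
  have hA0 : 0 ≤ A := integral_nonneg fun x => Finset.sum_nonneg fun i _ => sq_nonneg _
  refine ⟨2 ^ d * M ^ 2 / (m ^ 2 * B), 16 * M ^ 2 * (A + 1) / (m ^ 2 * B),
    by positivity, by positivity, ?_⟩
  intro L hL V hV0 hVloc
  have hL0 : 0 < L := lt_trans one_pos hL
  set c : ℝ := L / 4 with hcdef
  have hc : 0 < c := by positivity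
  set Λ : Set (Fin d → ℝ) := {x : Fin d → ℝ | ‖x‖ < L / 4} with hΛdef
  have hΛball : Λ = Metric.ball 0 c := by
    ext x; simp [hΛdef, Metric.mem_ball, dist_zero_right, hcdef]
  have hΛmeas : MeasurableSet Λ := by
    rw [hΛball]; exact measurableSet_ball
  have hVint : 0 ≤ ∫ x in Λ, V x := setIntegral_nonneg hΛmeas fun x _ => hV0 x
  -- the cutoff χ and trial function φ
  set χ : (Fin d → ℝ) → ℝ := fun x => η (c⁻¹ • x) with hχdef
  have hχsmooth : ContDiff ℝ 1 χ := hη1.comp (contDiff_const_smul c⁻¹)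
  have hχcont : Continuous χ := hχsmooth.continuous
  have hχdiff : Differentiable ℝ χ := hχsmooth.differentiable one_ne_zero
  have hχ01 : ∀ x, 0 ≤ χ x ∧ χ x ≤ 1 := fun x => hη01 _
  have hχvanish : ∀ x : Fin d → ℝ, x ∉ Metric.closedBall 0 (c / 2) → χ x = 0 := by
    intro x hx
    have hxn : c / 2 < ‖x‖ := by
      simpa [Metric.mem_closedBall, dist_zero_right, not_le] using hx
    have hnm : c⁻¹ • x ∉ tsupport η := by
      intro hmem
      have h1 : ‖c⁻¹ • x‖ < 1 / 2 := by
        simpa [Metric.mem_ball, dist_zero_right] using hηsupp hmem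
      rw [norm_smul, norm_inv, Real.norm_eq_abs, abs_of_pos hc] at h1
      have h2 : ‖x‖ < c / 2 := by
        calc ‖x‖ = c * (c⁻¹ * ‖x‖) := by field_simp
        _ < c * (1 / 2) := mul_lt_mul_of_pos_left h1 hc
        _ = c / 2 := by ring
      linarith
    show η (c⁻¹ • x) = 0
    exact image_eq_zero_of_notMem_tsupport hnm
  have hχcpt : HasCompactSupport χ :=
    HasCompactSupport.intro (isCompact_closedBall 0 (c / 2)) hχvanish
  have hχtsupp : tsupport χ ⊆ Metric.closedBall 0 (c / 2) := by
    apply closure_minimal _ Metric.isClosed_closedBall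
    intro x hx
    by_contra hxc
    exact hx (hχvanish x hxc)
  set φ : (Fin d → ℝ) → ℝ := fun x => ψ x * χ x with hφdef
  have hφC1 : ContDiff ℝ 1 φ := hψ_C1.mul hχsmooth
  have hφcpt : HasCompactSupport φ := by
    have : HasCompactSupport (ψ * χ) := HasCompactSupport.mul_left hχcpt
    exact this
  have hφsupp : tsupport φ ⊆ Λ := by
    have h1 : tsupport φ ⊆ tsupport χ := by
      apply closure_mono
      intro x hx
      simp only [Function.mem_support, hφdef] at hx ⊢
      intro h; exact hx (by rw [h, mul_zero])
    refine h1.trans (hχtsupp.trans ?_)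
    rw [hΛball]
    intro x hx
    simp only [Metric.mem_closedBall, dist_zero_right] at hx
    simp only [Metric.mem_ball, dist_zero_right]
    linarith
  have hφne : φ ≠ 0 := by
    intro h
    have h0 : φ 0 = 0 := by rw [h]; rfl
    rw [hφdef] at h0
    simp only [hχdef, smul_zero, hη0, mul_one] at h0
    exact (hψ_pos 0).ne' h0
  -- derivative formulas
  have hdψ : ∀ x, DifferentiableAt ℝ ψ x := fun x => (hψ_C1.differentiable one_ne_zero) x
  have hdχ : ∀ x, DifferentiableAt ℝ χ x := fun x => hχdiff x
  have hχfd : ∀ (x v : Fin d → ℝ), fderiv ℝ χ x v = c⁻¹ * fderiv ℝ η (c⁻¹ • x) v := by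
    intro x v
    have h3 : HasFDerivAt (fun y : Fin d → ℝ => c⁻¹ • y)
        (c⁻¹ • ContinuousLinearMap.id ℝ (Fin d → ℝ)) x :=
      (ContinuousLinearMap.id ℝ (Fin d → ℝ)).hasFDerivAt.const_smul c⁻¹
    have h1 : HasFDerivAt χ
        ((fderiv ℝ η (c⁻¹ • x)).comp (c⁻¹ • ContinuousLinearMap.id ℝ (Fin d → ℝ))) x :=
      (hηdiff (c⁻¹ • x)).hasFDerivAt.comp x h3
    rw [h1.fderiv]
    simp only [ContinuousLinearMap.coe_comp', Function.comp_apply,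
      ContinuousLinearMap.coe_smul', Pi.smul_apply, ContinuousLinearMap.coe_id', id_eq]
    rw [(fderiv ℝ η (c⁻¹ • x)).map_smul, smul_eq_mul]
  have hφ' : ∀ (x v : Fin d → ℝ), fderiv ℝ φ x v
      = fderiv ℝ ψ x v * χ x + ψ x * fderiv ℝ χ x v := by
    intro x v
    rw [hφdef, fderiv_fun_mul (hdψ x) (hdχ x)]
    simp only [ContinuousLinearMap.add_apply, ContinuousLinearMap.coe_smul',
      Pi.smul_apply, smul_eq_mul]
    ring
  set w : (Fin d → ℝ) → ℝ := fun x => ψ x * (χ x * χ x) with hwdef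
  have hwC1 : ContDiff ℝ 1 w := hψ_C1.mul (hχsmooth.mul hχsmooth)
  have hwcpt : HasCompactSupport w := by
    have h1 : HasCompactSupport (χ * χ) := HasCompactSupport.mul_left hχcpt
    have h2 : HasCompactSupport (ψ * (χ * χ)) := HasCompactSupport.mul_left h1
    exact h2
  have hwcont : Continuous w := hwC1.continuous
  have hw' : ∀ (x v : Fin d → ℝ), fderiv ℝ w x v
      = fderiv ℝ ψ x v * (χ x * χ x) + ψ x * (2 * χ x * fderiv ℝ χ x v) := by
    intro x v
    have hdχχ : DifferentiableAt ℝ (fun y => χ y * χ y) x := (hdχ x).mul (hdχ x)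
    have h2 : fderiv ℝ (fun y => χ y * χ y) x v
        = χ x * fderiv ℝ χ x v + χ x * fderiv ℝ χ x v := by
      rw [fderiv_fun_mul (hdχ x) (hdχ x)]
      simp only [ContinuousLinearMap.add_apply, ContinuousLinearMap.coe_smul',
        Pi.smul_apply, smul_eq_mul]
    rw [hwdef, fderiv_fun_mul (hdψ x) hdχχ]
    simp only [ContinuousLinearMap.add_apply, ContinuousLinearMap.coe_smul',
      Pi.smul_apply, smul_eq_mul]
    rw [h2]
    ring
  -- the weak eigen-equation applied to w
  have hweak0 : (∫ x : Fin d → ℝ,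
      ((∑ i : Fin d, fderiv ℝ w x (Pi.single i 1) * fderiv ℝ ψ x (Pi.single i 1)) +
        U x * w x * ψ x)) = 0 := hweak w hwC1 hwcpt
  -- pointwise identity
  have key : ∀ x, ((∑ i : Fin d, (fderiv ℝ φ x (Pi.single i 1)) ^ 2) + (U x + V x) * φ x ^ 2)
      = (((∑ i : Fin d, fderiv ℝ w x (Pi.single i 1) * fderiv ℝ ψ x (Pi.single i 1)) +
          U x * w x * ψ x)
        + ((ψ x ^ 2 * ∑ i : Fin d, (fderiv ℝ χ x (Pi.single i 1)) ^ 2)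
        + V x * (ψ x * χ x) ^ 2)) := by
    intro x
    have hsum : (∑ i : Fin d, (fderiv ℝ φ x (Pi.single i 1)) ^ 2)
        = (∑ i : Fin d, fderiv ℝ w x (Pi.single i 1) * fderiv ℝ ψ x (Pi.single i 1))
          + ψ x ^ 2 * ∑ i : Fin d, (fderiv ℝ χ x (Pi.single i 1)) ^ 2 := by
      rw [Finset.mul_sum, ← Finset.sum_add_distrib]
      refine Finset.sum_congr rfl fun i _ => ?_
      rw [hφ' x _, hw' x _]
      ring
    rw [hsum]
    have hφx : φ x = ψ x * χ x := rfl
    have hwx : w x = ψ x * (χ x * χ x) := rfl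
    rw [hφx, hwx]
    ring
  -- continuity of partial derivatives
  have hfdcont : ∀ (f : (Fin d → ℝ) → ℝ), ContDiff ℝ 1 f → ∀ i : Fin d,
      Continuous fun x => fderiv ℝ f x (Pi.single i 1) := by
    intro f hf i
    exact (hf.continuous_fderiv_apply one_ne_zero).comp (continuous_id.prodMk continuous_const)
  have hgradχcont : Continuous fun x => ∑ i : Fin d, (fderiv ℝ χ x (Pi.single i 1)) ^ 2 :=
    continuous_finset_sum _ fun i _ => (hfdcont χ hχsmooth i).pow 2
  have hIgradχ : Integrable (fun x => ∑ i : Fin d, (fderiv ℝ χ x (Pi.single i 1)) ^ 2) := by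
    have hcs : HasCompactSupport fun x => ∑ i : Fin d, (fderiv ℝ χ x (Pi.single i 1)) ^ 2 := by
      refine HasCompactSupport.intro hχcpt fun x hx => ?_
      have h0 : fderiv ℝ χ x = 0 := by
        by_contra h
        exact hx (support_fderiv_subset ℝ (Function.mem_support.mpr h))
      simp [h0]
    exact hgradχcont.integrable_of_hasCompactSupport hcs
  have hIW : Integrable (fun x =>
      (∑ i : Fin d, fderiv ℝ w x (Pi.single i 1) * fderiv ℝ ψ x (Pi.single i 1)) +
        U x * w x * ψ x) := by
    apply Integrable.add
    · have hcont : Continuous fun x =>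
          ∑ i : Fin d, fderiv ℝ w x (Pi.single i 1) * fderiv ℝ ψ x (Pi.single i 1) :=
        continuous_finset_sum _ fun i _ => (hfdcont w hwC1 i).mul (hfdcont ψ hψ_C1 i)
      have hcs : HasCompactSupport fun x =>
          ∑ i : Fin d, fderiv ℝ w x (Pi.single i 1) * fderiv ℝ ψ x (Pi.single i 1) := by
        refine HasCompactSupport.intro hwcpt fun x hx => ?_
        have h0 : fderiv ℝ w x = 0 := by
          by_contra h
          exact hx (support_fderiv_subset ℝ (Function.mem_support.mpr h))
        simp [h0]
      exact hcont.integrable_of_hasCompactSupport hcs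
    · have h1 : Integrable (fun x => U x • (w x * ψ x)) :=
        hU_loc.integrable_smul_right_of_hasCompactSupport (hwcont.mul hψ_C1.continuous)
          (HasCompactSupport.mul_right hwcpt)
      simpa [smul_eq_mul, mul_assoc] using h1
  have hIG : Integrable (fun x => ψ x ^ 2 * ∑ i : Fin d, (fderiv ℝ χ x (Pi.single i 1)) ^ 2) := by
    have hcs : HasCompactSupport fun x =>
        ψ x ^ 2 * ∑ i : Fin d, (fderiv ℝ χ x (Pi.single i 1)) ^ 2 := by
      refine HasCompactSupport.intro hχcpt fun x hx => ?_
      have h0 : fderiv ℝ χ x = 0 := by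
        by_contra h
        exact hx (support_fderiv_subset ℝ (Function.mem_support.mpr h))
      simp [h0]
    exact ((hψ_C1.continuous.pow 2).mul hgradχcont).integrable_of_hasCompactSupport hcs
  have hIVv : Integrable (fun x => V x * (ψ x * χ x) ^ 2) := by
    have h1 : Integrable (fun x => V x • ((ψ x * χ x) ^ 2)) := by
      refine hVloc.integrable_smul_right_of_hasCompactSupport
        ((hψ_C1.continuous.mul hχcont).pow 2) ?_
      refine HasCompactSupport.intro hχcpt fun x hx => ?_
      have h0 : χ x = 0 := image_eq_zero_of_notMem_tsupport hx
      simp [h0]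
    simpa [smul_eq_mul] using h1
  -- split the energy integral
  have hsplit : (∫ x : Fin d → ℝ,
        ((∑ i : Fin d, (fderiv ℝ φ x (Pi.single i 1)) ^ 2) + (U x + V x) * φ x ^ 2))
      = (∫ x : Fin d → ℝ, ψ x ^ 2 * ∑ i : Fin d, (fderiv ℝ χ x (Pi.single i 1)) ^ 2)
        + ∫ x : Fin d → ℝ, V x * (ψ x * χ x) ^ 2 := by
    rw [show (fun x : Fin d → ℝ =>
        ((∑ i : Fin d, (fderiv ℝ φ x (Pi.single i 1)) ^ 2) + (U x + V x) * φ x ^ 2))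
      = fun x : Fin d → ℝ =>
        (((∑ i : Fin d, fderiv ℝ w x (Pi.single i 1) * fderiv ℝ ψ x (Pi.single i 1)) +
          U x * w x * ψ x)
        + ((ψ x ^ 2 * ∑ i : Fin d, (fderiv ℝ χ x (Pi.single i 1)) ^ 2)
        + V x * (ψ x * χ x) ^ 2)) from funext fun x => key x]
    have hIGV : Integrable (fun x : Fin d → ℝ =>
        (ψ x ^ 2 * ∑ i : Fin d, (fderiv ℝ χ x (Pi.single i 1)) ^ 2)
          + V x * (ψ x * χ x) ^ 2) := hIG.add hIVv
    rw [integral_add hIW hIGV, hweak0, zero_add, integral_add hIG hIVv]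
  -- set-integrals equal full integrals
  have hnum : (∫ x in Λ,
        ((∑ i : Fin d, (fderiv ℝ φ x (Pi.single i 1)) ^ 2) + (U x + V x) * φ x ^ 2))
      = ∫ x : Fin d → ℝ,
          ((∑ i : Fin d, (fderiv ℝ φ x (Pi.single i 1)) ^ 2) + (U x + V x) * φ x ^ 2) := by
    apply setIntegral_eq_integral_of_forall_compl_eq_zero
    intro x hx
    have hφ0 : φ x = 0 := image_eq_zero_of_notMem_tsupport fun h => hx (hφsupp h)
    have h0 : fderiv ℝ φ x = 0 := by
      by_contra h
      exact hx (hφsupp (support_fderiv_subset ℝ (Function.mem_support.mpr h)))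
    simp [h0, hφ0]
  have hden : (∫ x in Λ, φ x ^ 2) = ∫ x : Fin d → ℝ, φ x ^ 2 := by
    apply setIntegral_eq_integral_of_forall_compl_eq_zero
    intro x hx
    simp [image_eq_zero_of_notMem_tsupport fun h => hx (hφsupp h)]
  -- scaling computations
  have hfinrank : Module.finrank ℝ (Fin d → ℝ) = d := by
    simp [Module.finrank_pi]
  have habs : |((c⁻¹ : ℝ) ^ d)⁻¹| = c ^ d := by
    rw [inv_pow, inv_inv, abs_of_pos (pow_pos hc d)]
  have hIχ2 : (∫ x : Fin d → ℝ, χ x ^ 2) = c ^ d * B := by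
    have h1 := Measure.integral_comp_smul (volume : Measure (Fin d → ℝ)) (fun y => η y ^ 2) c⁻¹
    rw [hfinrank, habs, ← hBdef] at h1
    simp only [smul_eq_mul] at h1
    simpa only [hχdef] using h1
  have hIgradc : (∫ x : Fin d → ℝ, ∑ i : Fin d, (fderiv ℝ χ x (Pi.single i 1)) ^ 2)
      = c⁻¹ ^ 2 * (c ^ d * A) := by
    have h1 := Measure.integral_comp_smul (volume : Measure (Fin d → ℝ))
      (fun y => ∑ i : Fin d, (fderiv ℝ η y (Pi.single i 1)) ^ 2) c⁻¹
    rw [hfinrank, habs, ← hAdef] at h1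
    simp only [smul_eq_mul] at h1
    calc (∫ x : Fin d → ℝ, ∑ i : Fin d, (fderiv ℝ χ x (Pi.single i 1)) ^ 2)
        = ∫ x : Fin d → ℝ, c⁻¹ ^ 2 * ∑ i : Fin d, (fderiv ℝ η (c⁻¹ • x) (Pi.single i 1)) ^ 2 := by
          congr 1
          funext x
          rw [Finset.mul_sum]
          refine Finset.sum_congr rfl fun i _ => ?_
          rw [hχfd x _]; ring
      _ = c⁻¹ ^ 2 * ∫ x : Fin d → ℝ, ∑ i : Fin d, (fderiv ℝ η (c⁻¹ • x) (Pi.single i 1)) ^ 2 :=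
          integral_const_mul _ _
      _ = c⁻¹ ^ 2 * (c ^ d * A) := by rw [h1]
  -- bound the gradient term
  have hGle : (∫ x : Fin d → ℝ, ψ x ^ 2 * ∑ i : Fin d, (fderiv ℝ χ x (Pi.single i 1)) ^ 2)
      ≤ M ^ 2 * (c⁻¹ ^ 2 * (c ^ d * A)) := by
    rw [← hIgradc, ← integral_const_mul]
    refine integral_mono hIG (hIgradχ.const_mul _) fun x => ?_
    have h1 : 0 ≤ ∑ i : Fin d, (fderiv ℝ χ x (Pi.single i 1)) ^ 2 :=
      Finset.sum_nonneg fun i _ => sq_nonneg _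
    have h2 : ψ x ^ 2 ≤ M ^ 2 := by nlinarith [hmψ x, hm, hψM x]
    exact mul_le_mul_of_nonneg_right h2 h1
  -- bound the potential term
  have hVvle : (∫ x : Fin d → ℝ, V x * (ψ x * χ x) ^ 2) ≤ M ^ 2 * ∫ x in Λ, V x := by
    have hstep1 : (∫ x : Fin d → ℝ, V x * (ψ x * χ x) ^ 2)
        = ∫ x in Λ, V x * (ψ x * χ x) ^ 2 := by
      symm
      apply setIntegral_eq_integral_of_forall_compl_eq_zero
      intro x hx
      have hxn : ¬ ‖x‖ < L / 4 := hx
      have hxc : x ∉ Metric.closedBall 0 (c / 2) := by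
        simp only [Metric.mem_closedBall, dist_zero_right, not_le]
        have h4 : L / 4 ≤ ‖x‖ := not_lt.mp hxn
        rw [hcdef]; linarith
      simp [hχvanish x hxc]
    have hVintΛ : IntegrableOn V Λ volume := by
      have h1 : IntegrableOn V (Metric.closedBall 0 c) volume :=
        hVloc.integrableOn_isCompact (isCompact_closedBall 0 c)
      refine h1.mono_set ?_
      rw [hΛball]; exact Metric.ball_subset_closedBall
    have h2 : (∫ x in Λ, V x * (ψ x * χ x) ^ 2) ≤ ∫ x in Λ, M ^ 2 * V x := by
      refine setIntegral_mono_on hIVv.integrableOn (hVintΛ.const_mul _) hΛmeas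
        fun x _ => ?_
      have hχx := hχ01 x
      have hψx := hψ_pos x
      have hψM' := hψM x
      have h4 : 0 ≤ ψ x * χ x := mul_nonneg hψx.le hχx.1
      have h5 : ψ x * χ x ≤ M := by nlinarith [hχx.1, hχx.2, hψx, hψM']
      have h3 : (ψ x * χ x) ^ 2 ≤ M ^ 2 := by nlinarith [h4, h5]
      calc V x * (ψ x * χ x) ^ 2 ≤ V x * M ^ 2 := mul_le_mul_of_nonneg_left h3 (hV0 x)
        _ = M ^ 2 * V x := by ring
    rw [hstep1]
    exact h2.trans (le_of_eq (integral_const_mul _ _))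
  -- bound the denominator from below
  have hIφ2 : Integrable (fun x => φ x ^ 2) := by
    refine (hφC1.continuous.pow 2).integrable_of_hasCompactSupport ?_
    refine HasCompactSupport.intro hφcpt fun x hx => ?_
    simp [image_eq_zero_of_notMem_tsupport hx]
  have hIχ2' : Integrable (fun x => χ x ^ 2) := by
    refine (hχcont.pow 2).integrable_of_hasCompactSupport ?_
    refine HasCompactSupport.intro hχcpt fun x hx => ?_
    simp [image_eq_zero_of_notMem_tsupport hx]
  have hdenge : m ^ 2 * (c ^ d * B) ≤ ∫ x : Fin d → ℝ, φ x ^ 2 := by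
    have h1 : (∫ x : Fin d → ℝ, m ^ 2 * χ x ^ 2) ≤ ∫ x : Fin d → ℝ, φ x ^ 2 := by
      refine integral_mono (hIχ2'.const_mul _) hIφ2 fun x => ?_
      have hχx := hχ01 x
      have hmx := hmψ x
      have hφx : φ x = ψ x * χ x := rfl
      rw [hφx]
      have h4 : 0 ≤ m * χ x := mul_nonneg hm.le hχx.1
      have h5 : m * χ x ≤ ψ x * χ x := mul_le_mul_of_nonneg_right hmx hχx.1
      nlinarith [h4, h5]
    calc m ^ 2 * (c ^ d * B) = ∫ x : Fin d → ℝ, m ^ 2 * χ x ^ 2 := by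
          rw [integral_const_mul, hIχ2]
      _ ≤ _ := h1
  -- ratio bound
  have hratio : (∫ x in Λ,
        ((∑ i : Fin d, (fderiv ℝ φ x (Pi.single i 1)) ^ 2) + (U x + V x) * φ x ^ 2)) /
        (∫ x in Λ, φ x ^ 2)
      ≤ 2 ^ d * M ^ 2 / (m ^ 2 * B) * ((volume Λ).toReal)⁻¹ * (∫ x in Λ, V x) +
        16 * M ^ 2 * (A + 1) / (m ^ 2 * B) / L ^ 2 := by
    rw [hnum, hden, hsplit]
    have hvol : (volume Λ).toReal = 2 ^ d * c ^ d := by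
      rw [hΛball, Real.volume_pi_ball 0 hc, toReal_ofReal (by positivity)]
      rw [Fintype.card_fin, mul_pow]
    have hD : (0:ℝ) < m ^ 2 * (c ^ d * B) := by positivity
    have hN0 : (0:ℝ) ≤ M ^ 2 * (c⁻¹ ^ 2 * (c ^ d * A)) + M ^ 2 * ∫ x in Λ, V x :=
      add_nonneg (by positivity) (mul_nonneg (by positivity) hVint)
    have hq := div_le_div₀ hN0 (add_le_add hGle hVvle) hD hdenge
    refine hq.trans ?_
    rw [hvol]
    have hL2c : (L:ℝ) ^ 2 = (4 * c) ^ 2 := by rw [hcdef]; ring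
    rw [hL2c]
    have hc0 : (c:ℝ) ≠ 0 := hc.ne'
    have hcd : (c:ℝ) ^ d ≠ 0 := pow_ne_zero _ hc0
    have h2d : ((2:ℝ)) ^ d ≠ 0 := by positivity
    have hexp : (M ^ 2 * (c⁻¹ ^ 2 * (c ^ d * A)) + M ^ 2 * ∫ x in Λ, V x) /
          (m ^ 2 * (c ^ d * B))
        = 2 ^ d * M ^ 2 / (m ^ 2 * B) * ((2 ^ d * c ^ d : ℝ))⁻¹ * (∫ x in Λ, V x) +
          (16 * M ^ 2 * A / (m ^ 2 * B)) / (4 * c) ^ 2 := by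
      field_simp
      ring
    rw [hexp]
    have hlast : (16 * M ^ 2 * A / (m ^ 2 * B)) / (4 * c) ^ 2
        ≤ 16 * M ^ 2 * (A + 1) / (m ^ 2 * B) / (4 * c) ^ 2 := by
      gcongr
      linarith
    linarith
  -- conclude via the infimum
  have hRHS0 : (0:ℝ) ≤ 2 ^ d * M ^ 2 / (m ^ 2 * B) * ((volume Λ).toReal)⁻¹ *
        (∫ x in Λ, V x) + 16 * M ^ 2 * (A + 1) / (m ^ 2 * B) / L ^ 2 := by
    have h1 : (0:ℝ) ≤ 2 ^ d * M ^ 2 / (m ^ 2 * B) * ((volume Λ).toReal)⁻¹ *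
        (∫ x in Λ, V x) := mul_nonneg (mul_nonneg (by positivity) (by positivity)) hVint
    have h2 : (0:ℝ) ≤ 16 * M ^ 2 * (A + 1) / (m ^ 2 * B) / L ^ 2 := by positivity
    linarith
  exact real_sInf_le_of_mem_of_le ⟨φ, hφC1, hφcpt, hφsupp, hφne, rfl⟩ hratio hRHS0
end
end
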